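/- arXiv:1911.04105 — 6 statements merged into one kernel-verified Lean document; each statement's English description precedes it below -/
import Mathlib

section
/- Let N ≥ 2, and for p < N let S_{N,p} = π^{p/2} N ((N-p)/(p-1))^{p-1} (Γ(N/p)Γ(N+1-N/p) / (Γ(N)Γ(1+N/2)))^{p/N} be the best Sobolev constant. Then S_{N,p} / (N-p)^{p-1} converges to a positive finite limit as p → N from below; in particular S_{N,p} ~ C(N)·(N-p)^{p-1} as p ↗ N. -/
open Real Filter Topology

theorem sobolev_constant_decay (N : ℕ) (hN : 2 ≤ N) :
    ∃ C : ℝ, 0 < C ∧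
      Tendsto
        (fun p : ℝ =>
          (π ^ (p / 2) * N * (((N : ℝ) - p) / (p - 1)) ^ (p - 1) *
              ((Real.Gamma ((N : ℝ) / p) * Real.Gamma ((N : ℝ) + 1 - (N : ℝ) / p)) /
                  (Real.Gamma (N : ℝ) * Real.Gamma (1 + (N : ℝ) / 2))) ^ (p / (N : ℝ))) /
            ((N : ℝ) - p) ^ (p - 1))
        (nhdsWithin (N : ℝ) (Set.Iio (N : ℝ))) (nhds C) := by
  have hN1 : (1:ℝ) < N := by exact_mod_cast Nat.lt_of_lt_of_le one_lt_two hN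
  have hN2 : (2:ℝ) ≤ N := by exact_mod_cast hN
  have hNpos : (0:ℝ) < N := by linarith
  have hGat : ∀ x : ℝ, 0 < x → ContinuousAt Real.Gamma x := fun x hx =>
    (Real.differentiableAt_Gamma fun m => by
      have : -(m:ℝ) ≤ 0 := neg_nonpos.mpr (Nat.cast_nonneg m)
      intro h; linarith).continuousAt
  set R : ℝ → ℝ := fun p =>
    (Real.Gamma ((N : ℝ) / p) * Real.Gamma ((N : ℝ) + 1 - (N : ℝ) / p)) /
      (Real.Gamma (N : ℝ) * Real.Gamma (1 + (N : ℝ) / 2)) with hR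
  set g : ℝ → ℝ := fun p =>
    π ^ (p / 2) * N * ((p - 1)⁻¹) ^ (p - 1) * R p ^ (p / (N : ℝ)) with hg
  have hNN : (N:ℝ) / N = 1 := div_self hNpos.ne'
  have hRN : 0 < R N := by
    rw [hR]
    have h1 : 0 < Real.Gamma ((N:ℝ) / N) := Real.Gamma_pos_of_pos (by rw [hNN]; norm_num)
    have h2 : 0 < Real.Gamma ((N:ℝ) + 1 - (N:ℝ) / N) := Real.Gamma_pos_of_pos (by rw [hNN]; linarith)
    have h3 : 0 < Real.Gamma (N:ℝ) := Real.Gamma_pos_of_pos hNpos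
    have h4 : 0 < Real.Gamma (1 + (N:ℝ)/2) := Real.Gamma_pos_of_pos (by positivity)
    positivity
  have hgN : 0 < g N := by
    have h1 : 0 < π ^ ((N:ℝ) / 2) := rpow_pos_of_pos pi_pos _
    have h2 : 0 < (((N:ℝ) - 1)⁻¹) ^ ((N:ℝ) - 1) := rpow_pos_of_pos (inv_pos.mpr (by linarith)) _
    have h3 : 0 < R N ^ ((N:ℝ) / N) := rpow_pos_of_pos hRN _
    rw [hg]
    positivity
  refine ⟨g N, hgN, ?_⟩
  have hcont : ContinuousAt g (N:ℝ) := by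
    have hdiv : ContinuousAt (fun p : ℝ => (N:ℝ) / p) N :=
      continuousAt_const.div continuousAt_id hNpos.ne'
    have hc1 : ContinuousAt (fun p : ℝ => Real.Gamma ((N:ℝ)/p)) N := by
      exact ContinuousAt.comp (x := (N:ℝ)) (g := Real.Gamma)
        (hGat ((N:ℝ)/N) (by rw [hNN]; norm_num)) hdiv
    have hc2 : ContinuousAt (fun p : ℝ => Real.Gamma ((N:ℝ) + 1 - (N:ℝ)/p)) N := by
      have hinner : ContinuousAt (fun p : ℝ => (N:ℝ) + 1 - (N:ℝ)/p) N :=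
        continuousAt_const.sub hdiv
      exact ContinuousAt.comp (x := (N:ℝ)) (g := Real.Gamma)
        (hGat ((N:ℝ) + 1 - (N:ℝ)/N) (by rw [hNN]; linarith)) hinner
    have hden : (Real.Gamma (N:ℝ) * Real.Gamma (1 + (N:ℝ)/2)) ≠ 0 := by
      have h3 : 0 < Real.Gamma (N:ℝ) := Real.Gamma_pos_of_pos hNpos
      have h4 : 0 < Real.Gamma (1 + (N:ℝ)/2) := Real.Gamma_pos_of_pos (by positivity)
      positivity
    have hcR : ContinuousAt R (N:ℝ) :=
      ((hc1.mul hc2).div continuousAt_const hden)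
    have f1 : ContinuousAt (fun p : ℝ => π ^ (p/2)) N :=
      continuousAt_const.rpow (continuousAt_id.div continuousAt_const two_ne_zero)
        (Or.inl pi_ne_zero)
    have f2 : ContinuousAt (fun p : ℝ => ((p - 1)⁻¹) ^ (p - 1)) N :=
      ((continuousAt_id.sub continuousAt_const).inv₀ (by simp; linarith)).rpow
        (continuousAt_id.sub continuousAt_const)
        (Or.inl (by simp; intro h; linarith))
    have f3 : ContinuousAt (fun p : ℝ => R p ^ (p / (N:ℝ))) N :=
      hcR.rpow (continuousAt_id.div continuousAt_const hNpos.ne') (Or.inl hRN.ne')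
    exact ((f1.mul continuousAt_const).mul f2).mul f3
  have hlim : Tendsto g (nhdsWithin (N:ℝ) (Set.Iio (N:ℝ))) (nhds (g N)) :=
    hcont.continuousWithinAt
  refine hlim.congr' ?_
  filter_upwards [Ioo_mem_nhdsLT_of_mem (Set.mem_Ioc.mpr ⟨by linarith, le_refl _⟩ :
      (N:ℝ) ∈ Set.Ioc ((N:ℝ) - 1) (N:ℝ))] with p hp
  obtain ⟨hp1, hp2⟩ := hp
  have hpm1 : 0 < p - 1 := by linarith
  have hsub : 0 < (N:ℝ) - p := by linarith
  have hBe : 0 < ((N:ℝ) - p) ^ (p - 1) := rpow_pos_of_pos hsub _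
  have hPe : 0 < (p - 1) ^ (p - 1) := rpow_pos_of_pos hpm1 _
  have key : (((N:ℝ) - p) / (p - 1)) ^ (p - 1)
      = ((N:ℝ) - p) ^ (p - 1) * ((p - 1)⁻¹) ^ (p - 1) := by
    rw [Real.div_rpow hsub.le hpm1.le, Real.inv_rpow hpm1.le, div_eq_mul_inv]
  rw [hg]
  simp only
  rw [key]
  simp only [hR]
  field_simp
end

section
/- (Radial lemma) Let N ≥ 2 and let u ∈ C_c^1(ℝ^N) be a radial function supported in the ball B_ρ of radius ρ. Then for every x with 0 < |x| < ρ, |u(x)| ≤ ‖∇u‖_{L^N(ℝ^N)} · ω_{N-1}^{-1/N} · (log(ρ/|x|))^{(N-1)/N}, where ω_{N-1} is the surface area of the unit sphere in ℝ^N. -/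
open MeasureTheory Real

theorem radial_lemma (N : ℕ) (hN : 2 ≤ N) (ρ : ℝ) (hρ : 0 < ρ)
    (v : ℝ → ℝ) (u : EuclideanSpace ℝ (Fin N) → ℝ)
    (hrad : ∀ x : EuclideanSpace ℝ (Fin N), u x = v ‖x‖)
    (hu : ContDiff ℝ 1 u) (hsupp : ∀ r : ℝ, ρ ≤ r → v r = 0)
    (x : EuclideanSpace ℝ (Fin N)) (hx0 : 0 < ‖x‖) (hxρ : ‖x‖ < ρ) :
    |u x| ≤ (∫ y : EuclideanSpace ℝ (Fin N), ‖fderiv ℝ u y‖ ^ (N : ℝ)) ^ (1 / (N : ℝ)) *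
        ((N : ℝ) * π ^ ((N : ℝ) / 2) / Real.Gamma (1 + (N : ℝ) / 2)) ^ (-(1 / (N : ℝ))) *
        (Real.log (ρ / ‖x‖)) ^ (((N : ℝ) - 1) / N) := by
  classical
  have hN1 : (1:ℝ) < (N:ℝ) := by exact_mod_cast lt_of_lt_of_le one_lt_two hN
  have hN0 : (0:ℝ) < (N:ℝ) := lt_trans one_pos hN1
  have hNm1 : (0:ℝ) < (N:ℝ) - 1 := by linarith
  haveI : Nonempty (Fin N) := ⟨⟨0, by omega⟩⟩
  set r := ‖x‖ with hr
  set e : EuclideanSpace ℝ (Fin N) := ‖x‖⁻¹ • x with he_def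
  have he : ‖e‖ = 1 := by
    rw [he_def, norm_smul, norm_inv, norm_norm, inv_mul_cancel₀ hx0.ne']
  have hudiff : Differentiable ℝ u := hu.differentiable one_ne_zero
  have hcontfd : Continuous (fderiv ℝ u) := hu.continuous_fderiv one_ne_zero
  have hu0 : ∀ y : EuclideanSpace ℝ (Fin N), ρ ≤ ‖y‖ → u y = 0 := fun y hy => by
    rw [hrad y]; exact hsupp _ hy
  have hfd0 : ∀ y : EuclideanSpace ℝ (Fin N), ρ < ‖y‖ → fderiv ℝ u y = 0 := by
    intro y hy
    have hopen : IsOpen {z : EuclideanSpace ℝ (Fin N) | ρ < ‖z‖} :=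
      isOpen_lt continuous_const continuous_norm
    have heq : u =ᶠ[nhds y] fun _ => (0:ℝ) := by
      filter_upwards [hopen.mem_nhds hy] with z hz
      exact hu0 z (le_of_lt hz)
    rw [heq.fderiv_eq, fderiv_fun_const]; rfl
  -- key derivative fact
  have hkey : ∀ (ε : EuclideanSpace ℝ (Fin N)), ‖ε‖ = 1 → ∀ s : ℝ, 0 < s →
      HasDerivAt v ((fderiv ℝ u (s • ε)) ε) s := by
    intro ε hε s hs
    have h2 : HasDerivAt (fun t : ℝ => t • ε) ((1:ℝ) • ε) s := (hasDerivAt_id s).smul_const ε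
    rw [one_smul] at h2
    have h1 : HasDerivAt (fun t : ℝ => u (t • ε)) ((fderiv ℝ u (s • ε)) ε) s :=
      (hudiff (s • ε)).hasFDerivAt.comp_hasDerivAt s h2
    have heq : v =ᶠ[nhds s] fun t : ℝ => u (t • ε) := by
      filter_upwards [eventually_gt_nhds hs] with t ht
      rw [hrad, norm_smul, hε, mul_one, Real.norm_eq_abs, abs_of_pos ht]
    exact h1.congr_of_eventuallyEq heq
  set D : ℝ → ℝ := fun s => (fderiv ℝ u (s • e)) e with hD_def
  have hD : Continuous D :=
    (hcontfd.comp (continuous_id.smul continuous_const)).clm_apply continuous_const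
  have hDv : ∀ s : ℝ, 0 < s → deriv v s = D s := fun s hs => (hkey e he s hs).deriv
  have hD0 : ∀ s : ℝ, ρ < |s| → D s = 0 := by
    intro s hs
    have : ρ < ‖s • e‖ := by rw [norm_smul, he, mul_one, Real.norm_eq_abs]; exact hs
    rw [hD_def]; simp [hfd0 _ this]
  have hrρ : r ≤ ρ := le_of_lt hxρ
  -- FTC
  have hFTC : v ρ - v r = ∫ s in r..ρ, D s := by
    refine (intervalIntegral.integral_eq_sub_of_hasDerivAt (fun s hs => ?_)
      (hD.intervalIntegrable r ρ)).symm
    rw [Set.uIcc_of_le hrρ] at hs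
    exact hkey e he s (lt_of_lt_of_le hx0 hs.1)
  have hvρ : v ρ = 0 := hsupp ρ le_rfl
  have step1 : |u x| ≤ ∫ s in Set.Ioc r ρ, |D s| := by
    rw [hrad x, ← hr]
    have : v r = -∫ s in r..ρ, D s := by rw [← hFTC, hvρ]; ring
    rw [this, abs_neg, ← intervalIntegral.integral_of_le hrρ]
    exact intervalIntegral.abs_integral_le_integral_abs hrρ
  -- Hölder's inequality
  set a : ℝ := ((N:ℝ) - 1) / N with ha_def
  have ha0 : 0 ≤ a := le_of_lt (div_pos hNm1 hN0)
  set q : ℝ := (N:ℝ) / ((N:ℝ) - 1) with hq_def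
  have hpq : (N:ℝ).HolderConjugate q := Real.HolderConjugate.conjExponent hN1
  set μ : Measure ℝ := volume.restrict (Set.Ioc r ρ) with hμ_def
  haveI : IsFiniteMeasure μ := ⟨by
    rw [hμ_def, Measure.restrict_apply_univ]; exact measure_Ioc_lt_top⟩
  set f : ℝ → ℝ := fun s => |D s| * s ^ a with hf_def
  set g : ℝ → ℝ := fun s => s ^ (-a) with hg_def
  have hsmem : ∀ᵐ s ∂μ, s ∈ Set.Ioc r ρ := ae_restrict_mem measurableSet_Ioc
  obtain ⟨C, hC⟩ := (isCompact_Icc (a := r) (b := ρ)).exists_bound_of_continuousOn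
    hD.continuousOn
  have hf_nn : 0 ≤ᵐ[μ] f := by
    filter_upwards [hsmem] with s hs
    exact mul_nonneg (abs_nonneg _) (Real.rpow_nonneg (le_of_lt (lt_trans hx0 hs.1)) a)
  have hg_nn : 0 ≤ᵐ[μ] g := by
    filter_upwards [hsmem] with s hs
    exact Real.rpow_nonneg (le_of_lt (lt_trans hx0 hs.1)) _
  have hfmem : MemLp f (ENNReal.ofReal (N:ℝ)) μ := by
    refine MemLp.mono_exponent (memLp_top_of_bound ?_ (|C| * ρ ^ a) ?_) le_top
    · exact ((hD.abs.mul (Real.continuous_rpow_const ha0)).aestronglyMeasurable)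
    · filter_upwards [hsmem] with s hs
      have hs0 : 0 < s := lt_trans hx0 hs.1
      have h1 : |D s| ≤ |C| := le_trans (hC s ⟨le_of_lt hs.1, hs.2⟩) (le_abs_self C)
      have h2 : s ^ a ≤ ρ ^ a := Real.rpow_le_rpow hs0.le hs.2 ha0
      rw [Real.norm_eq_abs, hf_def, abs_mul, abs_abs,
        abs_of_nonneg (Real.rpow_nonneg hs0.le a)]
      exact mul_le_mul h1 h2 (Real.rpow_nonneg hs0.le a) (abs_nonneg _)
  have hgmem : MemLp g (ENNReal.ofReal q) μ := by
    refine MemLp.mono_exponent (memLp_top_of_bound ?_ (r ^ (-a)) ?_) le_top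
    · refine ContinuousOn.aestronglyMeasurable ?_ measurableSet_Ioc
      refine ContinuousOn.rpow_const continuousOn_id fun s hs => Or.inl ?_
      exact ne_of_gt (lt_trans hx0 hs.1)
    · filter_upwards [hsmem] with s hs
      have hs0 : 0 < s := lt_trans hx0 hs.1
      rw [Real.norm_eq_abs, hg_def, abs_of_nonneg (Real.rpow_nonneg hs0.le _)]
      exact Real.rpow_le_rpow_of_nonpos hx0 hs.1.le (neg_nonpos.mpr ha0)
  have hholder := integral_mul_le_Lp_mul_Lq_of_nonneg hpq hf_nn hg_nn hfmem hgmem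
  -- identify the three integrals in Hölder
  have hfg : ∫ s, f s * g s ∂μ = ∫ s in Set.Ioc r ρ, |D s| := by
    rw [hμ_def]
    refine setIntegral_congr_fun measurableSet_Ioc fun s hs => ?_
    have hs0 : 0 < s := lt_trans hx0 hs.1
    rw [hf_def, hg_def, mul_assoc, ← Real.rpow_add hs0, add_neg_cancel, Real.rpow_zero,
      mul_one]
  have hfN : ∫ s, f s ^ (N:ℝ) ∂μ = ∫ s in Set.Ioc r ρ, s ^ (N - 1) * |D s| ^ N := by
    rw [hμ_def]
    refine setIntegral_congr_fun measurableSet_Ioc fun s hs => ?_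
    have hs0 : 0 < s := lt_trans hx0 hs.1
    rw [hf_def, Real.mul_rpow (abs_nonneg _) (Real.rpow_nonneg hs0.le a),
      ← Real.rpow_natCast (|D s|) N, ← Real.rpow_mul hs0.le]
    have haN : a * N = (N:ℝ) - 1 := by
      rw [ha_def]; field_simp
    rw [haN]
    have : ((N:ℝ) - 1) = ((N - 1 : ℕ) : ℝ) := by
      push_cast [Nat.cast_sub (le_trans one_le_two hN)]; ring
    rw [this, Real.rpow_natCast, Real.rpow_natCast, mul_comm]
  have hgq : ∫ s, g s ^ q ∂μ = Real.log (ρ / r) := by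
    rw [hμ_def]
    have h1 : ∫ s in Set.Ioc r ρ, g s ^ q = ∫ s in Set.Ioc r ρ, s⁻¹ := by
      refine setIntegral_congr_fun measurableSet_Ioc fun s hs => ?_
      have hs0 : 0 < s := lt_trans hx0 hs.1
      show (s ^ (-a)) ^ q = s⁻¹
      rw [← Real.rpow_mul hs0.le]
      have haq : -a * q = -1 := by
        rw [ha_def, hq_def]
        field_simp
      rw [haq, Real.rpow_neg_one]
    rw [h1, ← intervalIntegral.integral_of_le hrρ, integral_inv_of_pos hx0 hρ]
  -- geometric part: compare with the Dirichlet integral via polar coordinates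
  set W : ℝ → ℝ := fun s => s ^ (N - 1) * |D s| ^ N with hW_def
  have hWcont : Continuous W := (continuous_pow _).mul (hD.abs.pow N)
  have hWsupp : HasCompactSupport W := by
    refine HasCompactSupport.intro (isCompact_Icc (a := -ρ) (b := ρ)) fun s hs => ?_
    have habs : ρ < |s| := by
      have h2 : -ρ ≤ s → ρ < s := by simpa [Set.mem_Icc] using hs
      rcases le_or_gt (-ρ) s with h | h
      · exact lt_of_lt_of_le (h2 h) (le_abs_self s)
      · exact lt_of_lt_of_le (by linarith) (neg_le_abs s)
    rw [hW_def]
    simp [hD0 s habs, zero_pow (show N ≠ 0 by omega)]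
  have hWint : Integrable W := hWcont.integrable_of_hasCompactSupport hWsupp
  set V : ℝ → ℝ := fun s => s ^ (N - 1) * |deriv v s| ^ N with hV_def
  have hVW : Set.EqOn W V (Set.Ioi 0) := fun s hs => by
    rw [hW_def, hV_def]; simp only; rw [hDv s hs]
  have hVint : IntegrableOn V (Set.Ioi 0) :=
    (hWint.integrableOn).congr_fun hVW measurableSet_Ioi
  have hXV : ∫ s in Set.Ioc r ρ, s ^ (N - 1) * |D s| ^ N = ∫ s in Set.Ioc r ρ, V s := by
    refine setIntegral_congr_fun measurableSet_Ioc fun s hs => ?_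
    exact hVW (lt_trans hx0 hs.1)
  have hXY : ∫ s in Set.Ioc r ρ, V s ≤ ∫ s in Set.Ioi 0, V s := by
    refine setIntegral_mono_set hVint ?_ (HasSubset.Subset.eventuallyLE fun s hs => lt_trans hx0 hs.1)
    filter_upwards [ae_restrict_mem measurableSet_Ioi] with s hs
    exact mul_nonneg (pow_nonneg (le_of_lt hs) _) (pow_nonneg (abs_nonneg _) _)
  -- polar coordinates
  set volTo : ℝ := (volume (Metric.ball (0 : EuclideanSpace ℝ (Fin N)) 1)).toReal with hvolTo_def
  have hvolTo_pos : 0 < volTo := by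
    rw [hvolTo_def]
    refine ENNReal.toReal_pos (ne_of_gt (Metric.measure_ball_pos _ _ one_pos)) ?_
    exact ne_of_lt measure_ball_lt_top
  have hsph := MeasureTheory.integral_fun_norm_addHaar
    (volume : Measure (EuclideanSpace ℝ (Fin N))) (fun t => |deriv v t| ^ N)
  rw [finrank_euclideanSpace_fin] at hsph
  have hsph' : ∫ y : EuclideanSpace ℝ (Fin N), |deriv v ‖y‖| ^ N =
      (N : ℝ) * volTo * ∫ s in Set.Ioi (0:ℝ), V s := by
    rw [hsph, nsmul_eq_mul, smul_eq_mul, ← mul_assoc, hvolTo_def]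
    congr 1
  have hAint : Integrable (fun y : EuclideanSpace ℝ (Fin N) => ‖fderiv ℝ u y‖ ^ N) := by
    refine Continuous.integrable_of_hasCompactSupport (hcontfd.norm.pow N) ?_
    refine HasCompactSupport.intro (isCompact_closedBall (0 : EuclideanSpace ℝ (Fin N)) ρ)
      fun y hy => ?_
    have hyρ : ρ < ‖y‖ := by
      simpa [Metric.mem_closedBall, dist_zero_right, not_le] using hy
    simp [hfd0 y hyρ, zero_pow (show N ≠ 0 by omega)]
  have hptwise : ∀ᵐ y : EuclideanSpace ℝ (Fin N),
      |deriv v ‖y‖| ^ N ≤ ‖fderiv ℝ u y‖ ^ N := by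
    have h0 : ∀ᵐ y : EuclideanSpace ℝ (Fin N), y ≠ 0 := by
      rw [ae_iff]
      have : {y : EuclideanSpace ℝ (Fin N) | ¬ y ≠ 0} = {0} := by ext y; simp
      rw [this]
      exact measure_singleton 0
    filter_upwards [h0] with y hy
    have hy0 : 0 < ‖y‖ := norm_pos_iff.mpr hy
    have hunit : ‖(‖y‖⁻¹ • y : EuclideanSpace ℝ (Fin N))‖ = 1 := by
      rw [norm_smul, norm_inv, norm_norm, inv_mul_cancel₀ hy0.ne']
    have hkd := hkey _ hunit ‖y‖ hy0
    rw [show ‖y‖ • (‖y‖⁻¹ • y) = y by rw [smul_smul, mul_inv_cancel₀ hy0.ne', one_smul]] at hkd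
    have hle : |deriv v ‖y‖| ≤ ‖fderiv ℝ u y‖ := by
      rw [hkd.deriv]
      calc |(fderiv ℝ u y) (‖y‖⁻¹ • y)| ≤ ‖fderiv ℝ u y‖ * ‖(‖y‖⁻¹ • y : EuclideanSpace ℝ (Fin N))‖ :=
            (fderiv ℝ u y).le_opNorm _
        _ = ‖fderiv ℝ u y‖ := by rw [hunit, mul_one]
    exact pow_le_pow_left₀ (abs_nonneg _) hle N
  have hsphle : (N : ℝ) * volTo * ∫ s in Set.Ioi (0:ℝ), V s ≤
      ∫ y : EuclideanSpace ℝ (Fin N), ‖fderiv ℝ u y‖ ^ N := by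
    rw [← hsph']
    exact integral_mono_of_nonneg (Filter.Eventually.of_forall fun y => by positivity) hAint hptwise
  -- value of the volume of the unit ball
  set ω : ℝ := (N : ℝ) * π ^ ((N:ℝ)/2) / Real.Gamma (1 + (N:ℝ)/2) with hω_def
  have hvol : volTo = π ^ ((N:ℝ)/2) / Real.Gamma (1 + (N:ℝ)/2) := by
    rw [hvolTo_def, EuclideanSpace.volume_ball, Fintype.card_fin, ENNReal.ofReal_one, one_pow,
      one_mul, ENNReal.toReal_ofReal (div_nonneg (pow_nonneg (Real.sqrt_nonneg _) _)
        (Real.Gamma_pos_of_pos (by positivity)).le)]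
    have hsq : Real.sqrt π ^ N = π ^ ((N:ℝ)/2) := by
      rw [Real.sqrt_eq_rpow, ← Real.rpow_natCast (π ^ ((1:ℝ)/2)) N, ← Real.rpow_mul pi_pos.le]
      congr 1; ring
    rw [hsq, add_comm]
  have hω_pos : 0 < ω := by
    rw [hω_def]
    have h1 := Real.Gamma_pos_of_pos (show (0:ℝ) < 1 + (N:ℝ)/2 by positivity)
    have h2 := Real.rpow_pos_of_pos pi_pos ((N:ℝ)/2)
    positivity
  have hωvol : ω = (N:ℝ) * volTo := by rw [hω_def, hvol]; ring
  -- combine everything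
  set A : ℝ := ∫ y : EuclideanSpace ℝ (Fin N), ‖fderiv ℝ u y‖ ^ N with hA_def
  have hA0 : 0 ≤ A := integral_nonneg fun y => by positivity
  set X : ℝ := ∫ s in Set.Ioc r ρ, s ^ (N - 1) * |D s| ^ N with hX_def
  have hX0 : 0 ≤ X := setIntegral_nonneg measurableSet_Ioc fun s hs => by
    have := lt_trans hx0 hs.1
    positivity
  have hXA : X ≤ ω⁻¹ * A := by
    rw [hXV]
    refine le_trans hXY ?_
    rw [hωvol, inv_mul_eq_div, le_div_iff₀ (by positivity)]
    calc (∫ s in Set.Ioi (0:ℝ), V s) * ((N:ℝ) * volTo)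
        = (N:ℝ) * volTo * ∫ s in Set.Ioi (0:ℝ), V s := by ring
      _ ≤ A := hsphle
  have hL0 : 0 ≤ Real.log (ρ / r) := Real.log_nonneg ((one_le_div hx0).mpr hrρ)
  have hfinal : |u x| ≤ X ^ (1/(N:ℝ)) * Real.log (ρ / r) ^ a := by
    calc |u x| ≤ ∫ s in Set.Ioc r ρ, |D s| := step1
      _ = ∫ s, f s * g s ∂μ := hfg.symm
      _ ≤ (∫ s, f s ^ (N:ℝ) ∂μ) ^ (1/(N:ℝ)) * (∫ s, g s ^ q ∂μ) ^ (1/q) := hholder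
      _ = X ^ (1/(N:ℝ)) * Real.log (ρ/r) ^ (1/q) := by rw [hfN, hgq]
      _ = X ^ (1/(N:ℝ)) * Real.log (ρ/r) ^ a := by rw [hq_def, ha_def, one_div_div]
  simp only [Real.rpow_natCast]
  calc |u x| ≤ X ^ (1/(N:ℝ)) * Real.log (ρ / r) ^ a := hfinal
    _ ≤ (ω⁻¹ * A) ^ (1/(N:ℝ)) * Real.log (ρ / r) ^ a := by
        refine mul_le_mul_of_nonneg_right ?_ (Real.rpow_nonneg hL0 a)
        exact Real.rpow_le_rpow hX0 hXA (by positivity)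
    _ = A ^ (1/(N:ℝ)) * ω ^ (-(1/(N:ℝ))) * Real.log (ρ / r) ^ a := by
        rw [Real.mul_rpow (inv_nonneg.mpr hω_pos.le) hA0, Real.inv_rpow hω_pos.le,
          ← Real.rpow_neg hω_pos.le, mul_comm (ω ^ (-(1/(N:ℝ))))]
end

section
/- (Improved Hardy inequality on a ball) For 1 ≤ p < N and any radial u ∈ C_c^1(B_R^N): ((N-p)/p)^p ∫_{B_R} |u(x)|^p / ( |x|^p (1 - (|x|/R)^{(N-p)/(p-1)})^p ) dx ≤ ∫_{B_R} |∇u(x)|^p dx. -/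
open MeasureTheory Real
open Set intervalIntegral


lemma abs_q_eq {p : ℝ} (hp : 1 < p) (t : ℝ) : |(|t| ^ (p - 2) * t)| = |t| ^ (p - 1) := by
  rcases eq_or_ne t 0 with rfl | ht
  · simp [Real.zero_rpow (by linarith : p - 1 ≠ 0)]
  · rw [abs_mul, abs_of_nonneg (Real.rpow_nonneg (abs_nonneg t) _),
      ← Real.rpow_add_one (abs_ne_zero.2 ht)]
    ring_nf

lemma continuous_q {p : ℝ} (hp : 1 < p) : Continuous fun t : ℝ => |t| ^ (p - 2) * t := by
  have h : Continuous (deriv fun x : ℝ => |x| ^ p) := by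
    have := contDiff_norm_rpow (E := ℝ) hp
    simp only [Real.norm_eq_abs] at this
    exact this.continuous_deriv le_rfl
  have hd : (deriv fun x : ℝ => |x| ^ p) = fun t => p * (|t| ^ (p - 2) * t) := by
    ext t
    rw [(hasDerivAt_abs_rpow t hp).deriv]
    ring
  rw [hd] at h
  have h2 : Continuous fun t : ℝ => p⁻¹ * (p * (|t| ^ (p - 2) * t)) := continuous_const.mul h
  convert h2 using 2 with t
  field_simp

lemma phi_pos {R α r : ℝ} (hR : 0 < R) (hα : 0 < α) (hr : 0 ≤ r) (hrR : r < R) :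
    0 < 1 - (r / R) ^ α := by
  rcases eq_or_lt_of_le hr with h0 | h0
  · simp [← h0, Real.zero_rpow hα.ne']
  · have h1 : (r / R) ^ α < 1 :=
      Real.rpow_lt_one (by positivity) (by rw [div_lt_one hR]; exact hrR) hα
    linarith

lemma hasDerivAt_H0 {n p R α r : ℝ} (hp : 1 < p) (hpn : p < n) (hR : 0 < R)
    (hα : α = (n - p) / (p - 1)) (hr : 0 < r) (hrR : r < R) :
    HasDerivAt (fun s : ℝ => s ^ (n - p) * (1 - (s / R) ^ α) ^ (1 - p))
      ((n - p) * (r ^ (n - p - 1) * (1 - (r / R) ^ α) ^ (-p))) r := by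
  have hp1 : (0:ℝ) < p - 1 := by linarith
  have hp1' : (0:ℝ) < p - 1 := by linarith
  have hαpos : 0 < α := by rw [hα]; exact div_pos (by linarith) hp1'
  have hb : 0 < r / R := by positivity
  have hφ : 0 < 1 - (r / R) ^ α := phi_pos hR hαpos hr.le hrR
  have hdiv : HasDerivAt (fun s : ℝ => s / R) (1 / R) r := (hasDerivAt_id r).div_const R
  have hpow : HasDerivAt (fun s : ℝ => (s / R) ^ α) (α * (r / R) ^ (α - 1) * (1 / R)) r := by
    have := (Real.hasDerivAt_rpow_const (x := r / R) (p := α) (Or.inl hb.ne')).comp r hdiv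
    simpa [Function.comp_def] using this
  have hφ' : HasDerivAt (fun s : ℝ => 1 - (s / R) ^ α) (-(α * (r / R) ^ (α - 1) * (1 / R))) r :=
    hpow.const_sub 1
  have h2 : HasDerivAt (fun s : ℝ => (1 - (s / R) ^ α) ^ (1 - p))
      ((1 - p) * (1 - (r / R) ^ α) ^ (1 - p - 1) * -(α * (r / R) ^ (α - 1) * (1 / R))) r := by
    have := (Real.hasDerivAt_rpow_const (x := 1 - (r / R) ^ α) (p := 1 - p)
      (Or.inl hφ.ne')).comp r hφ'
    simpa [mul_assoc, Function.comp_def] using this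
  have h1 : HasDerivAt (fun s : ℝ => s ^ (n - p)) ((n - p) * r ^ (n - p - 1)) r :=
    Real.hasDerivAt_rpow_const (Or.inl hr.ne')
  have h3 : HasDerivAt (fun s : ℝ => s ^ (n - p) * (1 - (s / R) ^ α) ^ (1 - p)) _ r := h1.mul h2
  convert h3 using 1
  have e1 : (1 : ℝ) - p - 1 = -p := by ring
  have e2 : (1 - (r / R) ^ α) ^ (1 - p) = (1 - (r / R) ^ α) * (1 - (r / R) ^ α) ^ (-p) := by
    rw [show (1:ℝ) - p = -p + 1 by ring, Real.rpow_add_one hφ.ne', mul_comm]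
  have e3 : (r / R) ^ (α - 1) = (r / R) ^ α / (r / R) := by
    rw [← Real.rpow_sub_one hb.ne']
  have e4 : r ^ (n - p) = r * r ^ (n - p - 1) := by
    rw [Real.rpow_sub_one hr.ne']
    field_simp
  have e5 : α * (p - 1) = n - p := by
    rw [hα]; field_simp
  rw [e1, e2, e3, e4]
  set X := r ^ (n - p - 1) with hX
  set S := (r / R) ^ α with hS
  set Φ := (1 - S) ^ (-p) with hΦ
  have hRne : R ≠ 0 := hR.ne'
  have hrne : r ≠ 0 := hr.ne'
  field_simp
  linear_combination (-(X * Φ * S)) * e5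

lemma young_pointwise {n p R α c r A B : ℝ} (hp : 1 < p) (hpn : p < n) (hR : 0 < R)
    (hα : α = (n - p) / (p - 1)) (hc : c = (n - p) / p) (hr : 0 < r) (hrR : r < R)
    (hA : 0 ≤ A) (hB : 0 ≤ B) :
    p * (B ^ (p - 1) * A * (c ^ (p - 1) * (r ^ (n - p) * (1 - (r / R) ^ α) ^ (1 - p)))) ≤
      A ^ p * r ^ (n - 1) +
        (p - 1) * (c ^ p * (B ^ p * (r ^ (n - 1 - p) * (1 - (r / R) ^ α) ^ (-p)))) := by
  have hp0 : (0:ℝ) < p := by linarith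
  have hp1 : (0:ℝ) < p - 1 := by linarith
  have hαpos : 0 < α := by rw [hα]; exact div_pos (by linarith) hp1
  have hcpos : 0 < c := by rw [hc]; exact div_pos (by linarith) hp0
  have hφ : 0 < 1 - (r / R) ^ α := phi_pos hR hαpos hr.le hrR
  set φ : ℝ := 1 - (r / R) ^ α with hφdef
  set q : ℝ := p / (p - 1) with hq
  have hpq : p.HolderConjugate q := Real.HolderConjugate.conjExponent hp
  set a : ℝ := A * r ^ ((n - 1) / p) with ha
  set b : ℝ := c ^ (p - 1) * B ^ (p - 1) * (r ^ (n - p - (n - 1) / p) * φ ^ (1 - p)) with hb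
  have ha0 : 0 ≤ a := mul_nonneg hA (Real.rpow_nonneg hr.le _)
  have hb0 : 0 ≤ b := by positivity
  have hy := Real.young_inequality_of_nonneg ha0 hb0 hpq
  have key : p * (a * b) ≤ a ^ p + (p - 1) * b ^ q := by
    have h2 : p * (a * b) ≤ p * (a ^ p / p + b ^ q / q) :=
      mul_le_mul_of_nonneg_left hy hp0.le
    have h3 : p * (a ^ p / p + b ^ q / q) = a ^ p + (p - 1) * b ^ q := by
      rw [hq]; field_simp
    linarith
  have e_ab : a * b =
      B ^ (p - 1) * A * (c ^ (p - 1) * (r ^ (n - p) * φ ^ (1 - p))) := by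
    rw [ha, hb]
    rw [show n - p = (n - 1) / p + (n - p - (n - 1) / p) by ring,
      Real.rpow_add hr ((n - 1) / p) (n - p - (n - 1) / p)]
    ring
  have e_a : a ^ p = A ^ p * r ^ (n - 1) := by
    rw [ha, Real.mul_rpow hA (Real.rpow_nonneg hr.le _), ← Real.rpow_mul hr.le,
      div_mul_cancel₀ _ hp0.ne']
  have e_b : b ^ q = c ^ p * (B ^ p * (r ^ (n - 1 - p) * φ ^ (-p))) := by
    rw [hb, Real.mul_rpow (by positivity) (by positivity),
      Real.mul_rpow (by positivity) (by positivity),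
      Real.mul_rpow (by positivity) (by positivity),
      ← Real.rpow_mul hcpos.le, ← Real.rpow_mul hB, ← Real.rpow_mul hr.le,
      ← Real.rpow_mul hφ.le, hq]
    rw [show (p - 1) * (p / (p - 1)) = p by field_simp,
      show (n - p - (n - 1) / p) * (p / (p - 1)) = n - 1 - p by field_simp; ring,
      show (1 - p) * (p / (p - 1)) = -p by field_simp; ring]
    ring
  rw [e_ab, e_a, e_b] at key
  exact key

set_option maxHeartbeats 2000000 in
lemma oneD_hardy {N : ℕ} (hN : 2 ≤ N) {p R ρ : ℝ} (hp : 1 < p) (hpN : p < N) (hR : 0 < R)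
    (hρ0 : 0 < ρ) (hρR : ρ < R) {w : ℝ → ℝ} (hw : ContDiff ℝ 1 w)
    (hw0 : ∀ r ≥ ρ, w r = 0) (hw0' : ∀ r ≥ ρ, deriv w r = 0) :
    (((N : ℝ) - p) / p) ^ p * ∫ r in Ioi (0:ℝ), r ^ (N - 1) •
        (|w r| ^ p / (r ^ p * (1 - (r / R) ^ (((N : ℝ) - p) / (p - 1))) ^ p))
      ≤ ∫ r in Ioi (0:ℝ), r ^ (N - 1) • |deriv w r| ^ p := by
  have hp0 : (0:ℝ) < p := by linarith
  have hp1 : (0:ℝ) < p - 1 := by linarith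
  set n : ℝ := (N : ℝ) with hn
  have hn2 : (2:ℝ) ≤ n := by rw [hn]; exact_mod_cast hN
  have hpn : p < n := hpN
  set α : ℝ := (n - p) / (p - 1) with hα
  set c : ℝ := (n - p) / p with hc
  have hαpos : 0 < α := div_pos (by linarith) hp1
  have hcpos : 0 < c := div_pos (by linarith) hp0
  have hnc : ((N - 1 : ℕ) : ℝ) = n - 1 := by
    rw [Nat.cast_sub (by omega)]; simp [hn]
  -- the two integrands
  set g₁ : ℝ → ℝ := fun r => r ^ (N - 1) •
      (|w r| ^ p / (r ^ p * (1 - (r / R) ^ α) ^ p)) with hg₁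
  set g₂ : ℝ → ℝ := fun r => r ^ (N - 1) • |deriv w r| ^ p with hg₂
  set φ : ℝ → ℝ := fun r => 1 - (r / R) ^ α with hφ
  set ψ : ℝ → ℝ := fun r => |w r| ^ p * (r ^ (n - 1 - p) * φ r ^ (-p)) with hψ
  have hφpos : ∀ r ∈ Icc (0:ℝ) ρ, 0 < φ r := fun r hr =>
    phi_pos hR hαpos hr.1 (lt_of_le_of_lt hr.2 hρR)
  -- continuity facts
  have hwc : Continuous w := hw.continuous
  have hw' : Continuous (deriv w) := hw.continuous_deriv le_rfl
  have habsp : Continuous fun t : ℝ => |t| ^ p :=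
    continuous_abs.rpow_const fun t => Or.inr hp0.le
  -- npow = rpow on positive reals
  have hnpow : ∀ r : ℝ, 0 < r → (r:ℝ) ^ (N - 1) = r ^ (n - 1) := fun r hr => by
    rw [← hnc, Real.rpow_natCast]
  -- g₁ = ψ on Ioc 0 ρ
  have hg₁ψ : ∀ r ∈ Ioc (0:ℝ) ρ, g₁ r = ψ r := by
    intro r hr
    have hr0 : 0 < r := hr.1
    have hφr : 0 < φ r := hφpos r ⟨hr0.le, hr.2⟩
    have hrp : (0:ℝ) < r ^ p := Real.rpow_pos_of_pos hr0 p
    have hφp : (0:ℝ) < φ r ^ p := Real.rpow_pos_of_pos hφr p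
    simp only [hg₁, hψ, smul_eq_mul]
    rw [hnpow r hr0, Real.rpow_neg hφr.le, show n - 1 - p = n - 1 + -p by ring,
      Real.rpow_add hr0, Real.rpow_neg hr0.le]
    simp only [hφ] at hφp ⊢
    field_simp
  -- g₁ vanishes on Ioi ρ
  have hg₁0 : ∀ r ∈ Ioi ρ, g₁ r = 0 := by
    intro r hr
    simp only [hg₁, smul_eq_mul]
    rw [hw0 r (le_of_lt hr), abs_zero, Real.zero_rpow hp0.ne', zero_div, mul_zero]
  -- g₂ vanishes on Ioi ρ
  have hg₂0 : ∀ r ∈ Ioi ρ, g₂ r = 0 := by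
    intro r hr
    simp only [hg₂, smul_eq_mul]
    rw [hw0' r (le_of_lt hr), abs_zero, Real.zero_rpow hp0.ne', mul_zero]
  -- integrability of ψ on Ioc 0 ρ
  have hψcont : ContinuousOn ψ (Ioc (0:ℝ) ρ) := by
    apply ContinuousOn.mul (habsp.comp hwc).continuousOn
    apply ContinuousOn.mul
    · intro r hr
      exact (Real.continuousAt_rpow_const _ _ (Or.inl hr.1.ne')).continuousWithinAt
    · apply ContinuousOn.rpow_const
      · apply ContinuousOn.sub continuousOn_const
        apply ContinuousOn.rpow_const (continuousOn_id.div_const R)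
        intro r hr
        exact Or.inr hαpos.le
      · intro r hr
        exact Or.inl (hφpos r ⟨hr.1.le, hr.2⟩).ne'
  obtain ⟨M, hM⟩ : ∃ M : ℝ, ∀ r ∈ Icc (0:ℝ) ρ, |w r| ≤ M :=
    ⟨sSup (abs ∘ w '' Icc 0 ρ), fun r hr =>
      le_csSup ((isCompact_Icc.image_of_continuousOn (continuous_abs.comp hwc).continuousOn).bddAbove)
        ⟨r, hr, rfl⟩⟩
  have hMp : 0 ≤ M := le_trans (abs_nonneg _) (hM 0 ⟨le_rfl, hρ0.le⟩)
  set C : ℝ := M ^ p * φ ρ ^ (-p) with hC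
  have hφρ : 0 < φ ρ := hφpos ρ ⟨hρ0.le, le_rfl⟩
  have hψbound : ∀ r ∈ Ioc (0:ℝ) ρ, ψ r ≤ C * r ^ (n - 1 - p) := by
    intro r hr
    have hφr : 0 < φ r := hφpos r ⟨hr.1.le, hr.2⟩
    have h1 : |w r| ^ p ≤ M ^ p :=
      Real.rpow_le_rpow (abs_nonneg _) (hM r ⟨hr.1.le, hr.2⟩) hp0.le
    have hmono : φ ρ ≤ φ r := by
      simp only [hφ]
      have h11 : (r / R) ^ α ≤ (ρ / R) ^ α := by
        apply Real.rpow_le_rpow (div_nonneg hr.1.le hR.le) _ hαpos.le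
        gcongr
        exact hr.2
      linarith
    have h2 : φ r ^ (-p) ≤ φ ρ ^ (-p) := by
      apply Real.rpow_le_rpow_of_nonpos hφρ hmono (by linarith)
    calc ψ r = |w r| ^ p * φ r ^ (-p) * r ^ (n - 1 - p) := by rw [hψ]; ring
      _ ≤ M ^ p * φ ρ ^ (-p) * r ^ (n - 1 - p) := by
          apply mul_le_mul_of_nonneg_right _ (Real.rpow_nonneg hr.1.le _)
          exact mul_le_mul h1 h2 (Real.rpow_nonneg hφr.le _) (Real.rpow_nonneg hMp _)
      _ = C * r ^ (n - 1 - p) := by rw [hC]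
  have hψnonneg : ∀ r ∈ Ioc (0:ℝ) ρ, 0 ≤ ψ r := by
    intro r hr
    have hφr : 0 < φ r := hφpos r ⟨hr.1.le, hr.2⟩
    exact mul_nonneg (Real.rpow_nonneg (abs_nonneg _) _)
      (mul_nonneg (Real.rpow_nonneg hr.1.le _) (Real.rpow_nonneg hφr.le _))
  have hmajor : IntegrableOn (fun r => C * r ^ (n - 1 - p)) (Ioc (0:ℝ) ρ) := by
    apply Integrable.const_mul
    have h0 := intervalIntegral.intervalIntegrable_rpow'
      (a := 0) (b := ρ) (by linarith : (-1:ℝ) < n - 1 - p)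
    rwa [intervalIntegrable_iff, uIoc_of_le hρ0.le] at h0
  have hψint : IntegrableOn ψ (Ioc (0:ℝ) ρ) := by
    apply Integrable.mono' hmajor (hψcont.aestronglyMeasurable measurableSet_Ioc)
    filter_upwards [ae_restrict_mem measurableSet_Ioc] with r hr
    rw [Real.norm_eq_abs, abs_of_nonneg (hψnonneg r hr)]
    exact hψbound r hr
  -- integrability of g₂ on Ioi 0
  have hg₂cont : Continuous g₂ := by
    simp only [hg₂, smul_eq_mul]
    exact (continuous_pow (N - 1)).mul (habsp.comp hw')
  have hg₂int : IntegrableOn g₂ (Ioi (0:ℝ)) := by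
    have h1 : IntegrableOn g₂ (Ioc (0:ℝ) ρ) :=
      (hg₂cont.continuousOn.integrableOn_compact isCompact_Icc).mono_set
        (Ioc_subset_Icc_self : Ioc (0:ℝ) ρ ⊆ Icc 0 ρ)
    have h2 : IntegrableOn g₂ (Ioi ρ) :=
      integrableOn_zero.congr_fun (fun r hr => (hg₂0 r hr).symm) measurableSet_Ioi
    exact (h1.union h2).mono_set fun x hx => by
      rcases le_or_gt x ρ with h | h
      · exact Or.inl ⟨hx, h⟩
      · exact Or.inr h
  have hg₂nonneg : ∀ r ∈ Ioi (0:ℝ), 0 ≤ g₂ r := by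
    intro r hr
    simp only [hg₂, smul_eq_mul]
    exact mul_nonneg (pow_nonneg (le_of_lt hr) _) (Real.rpow_nonneg (abs_nonneg _) _)
  -- reduce LHS integral
  have hLHS : ∫ r in Ioi (0:ℝ), g₁ r = ∫ r in Ioc (0:ℝ) ρ, ψ r := by
    rw [setIntegral_eq_of_subset_of_forall_diff_eq_zero measurableSet_Ioi
      (Ioc_subset_Ioi_self : Ioc (0:ℝ) ρ ⊆ Ioi 0) (fun r hr => ?_)]
    · exact setIntegral_congr_fun measurableSet_Ioc hg₁ψ
    · refine hg₁0 r ?_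
      rcases hr with ⟨h0, hnot⟩
      by_contra h
      exact hnot ⟨h0, not_lt.mp h⟩
  set Y : ℝ := ∫ r in Ioi (0:ℝ), g₂ r with hY
  have he : n - p - 1 = n - 1 - p := by ring
  -- key truncated estimate
  have key : ∀ k : ℕ, c ^ p * ∫ r in Ioc (ρ / (k+1)) ρ, ψ r ≤ Y := by
    intro k
    set ε : ℝ := ρ / (k+1) with hε
    have hk1 : (0:ℝ) < (k:ℝ) + 1 := by positivity
    have hε0 : 0 < ε := by rw [hε]; positivity
    have hερ : ε ≤ ρ := by
      rw [hε, div_le_iff₀ hk1]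
      nlinarith [Nat.cast_nonneg (α := ℝ) k]
    have hsub : Icc ε ρ ⊆ Ioo 0 R := fun r hr =>
      ⟨lt_of_lt_of_le hε0 hr.1, lt_of_le_of_lt hr.2 hρR⟩
    set F : ℝ → ℝ := fun r => |w r| ^ p * (r ^ (n - p) * φ r ^ (1 - p)) with hF
    set T1 : ℝ → ℝ := fun r =>
      (p * (|w r| ^ (p - 2) * w r) * deriv w r) * (r ^ (n - p) * φ r ^ (1 - p)) with hT1
    set T2 : ℝ → ℝ := fun r =>
      |w r| ^ p * ((n - p) * (r ^ (n - p - 1) * φ r ^ (-p))) with hT2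
    have hderiv : ∀ r ∈ uIcc ε ρ, HasDerivAt F (T1 r + T2 r) r := by
      intro r hr
      rw [uIcc_of_le hερ] at hr
      obtain ⟨hr0, hrlt⟩ := hsub hr
      have hwd : HasDerivAt w (deriv w r) r := ((hw.differentiable one_ne_zero) r).hasDerivAt
      have h1 : HasDerivAt (fun s => |w s| ^ p)
          (p * (|w r| ^ (p - 2) * w r) * deriv w r) r := by
        have : HasDerivAt (fun s => |w s| ^ p) _ r := (hasDerivAt_abs_rpow (w r) hp).comp r hwd
        convert this using 1
        ring
      have h2 := hasDerivAt_H0 hp hpn hR hα hr0 hrlt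
      have h3 : HasDerivAt (fun s => |w s| ^ p * (s ^ (n - p) * (1 - (s / R) ^ α) ^ (1 - p))) _ r :=
        h1.mul h2
      convert h3 using 1
    -- continuity on Icc ε ρ
    have hφcont : Continuous φ := by
      rw [hφ]
      exact continuous_const.sub
        ((continuous_id.div_const R).rpow_const fun x => Or.inr hαpos.le)
    have hrpowOn : ∀ q : ℝ, ContinuousOn (fun r : ℝ => r ^ q) (Icc ε ρ) := fun q r hr =>
      (Real.continuousAt_rpow_const _ _ (Or.inl (lt_of_lt_of_le hε0 hr.1).ne')).continuousWithinAt
    have hφposOn : ∀ r ∈ Icc ε ρ, 0 < φ r := fun r hr =>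
      hφpos r ⟨(lt_of_lt_of_le hε0 hr.1).le, hr.2⟩
    have hφpowOn : ∀ q : ℝ, ContinuousOn (fun r : ℝ => φ r ^ q) (Icc ε ρ) := fun q =>
      hφcont.continuousOn.rpow_const fun r hr => Or.inl (hφposOn r hr).ne'
    have hHcont : ContinuousOn (fun r : ℝ => r ^ (n - p) * φ r ^ (1 - p)) (Icc ε ρ) :=
      (hrpowOn _).mul (hφpowOn _)
    have hT1cont : ContinuousOn T1 (Icc ε ρ) := by
      apply ContinuousOn.mul _ hHcont
      exact ((continuous_const.mul ((continuous_q hp).comp hwc)).mul hw').continuousOn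
    have hT2cont : ContinuousOn T2 (Icc ε ρ) := by
      apply ContinuousOn.mul (habsp.comp hwc).continuousOn
      exact continuousOn_const.mul ((hrpowOn _).mul (hφpowOn _))
    have hT1int : IntervalIntegrable T1 volume ε ρ := by
      apply ContinuousOn.intervalIntegrable
      rwa [uIcc_of_le hερ]
    have hT2int : IntervalIntegrable T2 volume ε ρ := by
      apply ContinuousOn.intervalIntegrable
      rwa [uIcc_of_le hερ]
    have hFTC := intervalIntegral.integral_eq_sub_of_hasDerivAt hderiv (hT1int.add hT2int)
    rw [intervalIntegral.integral_add hT1int hT2int] at hFTC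
    have hFρ : F ρ = 0 := by
      simp only [hF]
      rw [hw0 ρ le_rfl, abs_zero, Real.zero_rpow hp0.ne', zero_mul]
    have hFε : 0 ≤ F ε := by
      have hφε : 0 < φ ε := hφposOn ε ⟨le_rfl, hερ⟩
      exact mul_nonneg (Real.rpow_nonneg (abs_nonneg _) _)
        (mul_nonneg (Real.rpow_nonneg hε0.le _) (Real.rpow_nonneg hφε.le _))
    -- the B bound
    set B : ℝ → ℝ := fun r =>
      p * (|w r| ^ (p - 1) * |deriv w r|) * (r ^ (n - p) * φ r ^ (1 - p)) with hB
    have hBcont : ContinuousOn B (Icc ε ρ) := by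
      apply ContinuousOn.mul _ hHcont
      apply continuousOn_const.mul
      apply ContinuousOn.mul _ (continuous_abs.comp hw').continuousOn
      exact ((continuous_abs.rpow_const fun t => Or.inr (by linarith)).comp hwc).continuousOn
    have hBint : IntervalIntegrable B volume ε ρ := by
      apply ContinuousOn.intervalIntegrable
      rwa [uIcc_of_le hερ]
    have hT1B : ∀ r ∈ Icc ε ρ, -T1 r ≤ B r := by
      intro r hr
      have hHnn : 0 ≤ r ^ (n - p) * φ r ^ (1 - p) :=
        mul_nonneg (Real.rpow_nonneg (lt_of_lt_of_le hε0 hr.1).le _)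
          (Real.rpow_nonneg (hφposOn r hr).le _)
      have habs : |T1 r| ≤ B r := by
        simp only [hT1, hB]
        rw [abs_mul, abs_of_nonneg hHnn]
        apply mul_le_mul_of_nonneg_right _ hHnn
        rw [abs_mul, abs_mul]
        rw [abs_of_pos hp0, abs_q_eq hp (w r), mul_assoc]
      linarith [neg_abs_le (T1 r), habs]
    have hmain1 : ∫ r in ε..ρ, T2 r ≤ ∫ r in ε..ρ, B r := by
      have h5 : -(∫ r in ε..ρ, T1 r) ≤ ∫ r in ε..ρ, B r := by
        rw [← intervalIntegral.integral_neg]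
        apply intervalIntegral.integral_mono_on hερ hT1int.neg hBint
        exact hT1B
      have h6 : ∫ r in ε..ρ, T2 r = F ρ - F ε - ∫ r in ε..ρ, T1 r := by linarith [hFTC]
      rw [h6, hFρ]
      linarith
    -- Young step
    set G : ℝ → ℝ := fun r => |deriv w r| ^ p * r ^ (n - 1) with hG
    have hGcont : ContinuousOn G (Icc ε ρ) :=
      ((habsp.comp hw').continuousOn).mul (hrpowOn _)
    have hGint : IntervalIntegrable G volume ε ρ := by
      apply ContinuousOn.intervalIntegrable
      rwa [uIcc_of_le hερ]
    have hψcontOn : ContinuousOn ψ (Icc ε ρ) := by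
      apply ContinuousOn.mul (habsp.comp hwc).continuousOn
      exact (hrpowOn _).mul (hφpowOn _)
    have hψintI : IntervalIntegrable ψ volume ε ρ := by
      apply ContinuousOn.intervalIntegrable
      rwa [uIcc_of_le hερ]
    have hYoung : ∀ r ∈ Icc ε ρ, c ^ (p - 1) * B r ≤ G r + (p - 1) * (c ^ p * ψ r) := by
      intro r hr
      obtain ⟨hr0, hrlt⟩ := hsub hr
      have := young_pointwise (A := |deriv w r|) (B := |w r|) hp hpn hR hα hc hr0 hrlt
        (abs_nonneg _) (abs_nonneg _)
      calc c ^ (p - 1) * B r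
          = p * (|w r| ^ (p - 1) * |deriv w r| *
            (c ^ (p - 1) * (r ^ (n - p) * φ r ^ (1 - p)))) := by simp only [hB]; ring
        _ ≤ |deriv w r| ^ p * r ^ (n - 1) +
            (p - 1) * (c ^ p * (|w r| ^ p * (r ^ (n - 1 - p) * φ r ^ (-p)))) := this
        _ = G r + (p - 1) * (c ^ p * ψ r) := by simp only [hG, hψ]
    have hmain2 : c ^ (p - 1) * ∫ r in ε..ρ, B r ≤
        (∫ r in ε..ρ, G r) + (p - 1) * (c ^ p * ∫ r in ε..ρ, ψ r) := by
      rw [← intervalIntegral.integral_const_mul]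
      have h7 : ∫ r in ε..ρ, c ^ (p - 1) * B r ≤
          ∫ r in ε..ρ, (G r + (p - 1) * (c ^ p * ψ r)) := by
        apply intervalIntegral.integral_mono_on hερ (hBint.const_mul _)
          (hGint.add ((hψintI.const_mul _).const_mul _))
        exact hYoung
      calc ∫ r in ε..ρ, c ^ (p - 1) * B r
          ≤ ∫ r in ε..ρ, (G r + (p - 1) * (c ^ p * ψ r)) := h7
        _ = (∫ r in ε..ρ, G r) + (p - 1) * (c ^ p * ∫ r in ε..ρ, ψ r) := by
            rw [intervalIntegral.integral_add hGint ((hψintI.const_mul _).const_mul _),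
              intervalIntegral.integral_const_mul, intervalIntegral.integral_const_mul]
    -- T2 relation to ψ
    have hT2ψ : ∀ r ∈ Icc ε ρ, c ^ (p - 1) * T2 r = p * c ^ p * ψ r := by
      intro r hr
      simp only [hT2, hψ, he]
      have hcp : c ^ (p - 1) * (n - p) = p * c ^ p := by
        have h8 : n - p = p * c := by rw [hc]; field_simp
        have h9 : c ^ (p - 1) * c = c ^ p := by
          rw [← Real.rpow_add_one hcpos.ne' (p - 1)]; ring_nf
        calc c ^ (p - 1) * (n - p) = p * (c ^ (p - 1) * c) := by rw [h8]; ring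
          _ = p * c ^ p := by rw [h9]
      calc c ^ (p - 1) * (|w r| ^ p * ((n - p) * (r ^ (n - 1 - p) * φ r ^ (-p))))
          = (c ^ (p - 1) * (n - p)) * (|w r| ^ p * (r ^ (n - 1 - p) * φ r ^ (-p))) := by ring
        _ = p * c ^ p * (|w r| ^ p * (r ^ (n - 1 - p) * φ r ^ (-p))) := by rw [hcp]
    have hT2ψint : c ^ (p - 1) * ∫ r in ε..ρ, T2 r = p * c ^ p * ∫ r in ε..ρ, ψ r := by
      rw [← intervalIntegral.integral_const_mul, ← intervalIntegral.integral_const_mul]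
      apply intervalIntegral.integral_congr
      intro r hr
      rw [uIcc_of_le hερ] at hr
      exact hT2ψ r hr
    -- assemble
    have hcpow : 0 ≤ c ^ (p - 1) := Real.rpow_nonneg hcpos.le _
    have hstep : p * c ^ p * ∫ r in ε..ρ, ψ r ≤
        (∫ r in ε..ρ, G r) + (p - 1) * (c ^ p * ∫ r in ε..ρ, ψ r) := by
      rw [← hT2ψint]
      calc c ^ (p - 1) * ∫ r in ε..ρ, T2 r
          ≤ c ^ (p - 1) * ∫ r in ε..ρ, B r := by
            apply mul_le_mul_of_nonneg_left hmain1 hcpow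
        _ ≤ _ := hmain2
    have hfinal : c ^ p * ∫ r in ε..ρ, ψ r ≤ ∫ r in ε..ρ, G r := by nlinarith [hstep]
    -- G integral ≤ Y
    have hGY : ∫ r in ε..ρ, G r ≤ Y := by
      rw [intervalIntegral.integral_of_le hερ]
      have hGg₂ : ∀ r ∈ Ioc ε ρ, G r = g₂ r := by
        intro r hr
        have hr0 : 0 < r := lt_of_lt_of_le hε0 hr.1.le
        simp only [hG, hg₂, smul_eq_mul]
        rw [hnpow r hr0]
        ring
      rw [setIntegral_congr_fun measurableSet_Ioc hGg₂]
      apply setIntegral_mono_set hg₂int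
      · filter_upwards [ae_restrict_mem measurableSet_Ioi] with r hr
        exact hg₂nonneg r hr
      · apply HasSubset.Subset.eventuallyLE
        exact fun x hx => lt_of_lt_of_le hε0 hx.1.le
    rw [intervalIntegral.integral_of_le hερ] at hfinal
    exact le_trans hfinal hGY
  -- monotone convergence
  have hmono : Monotone (fun k : ℕ => Ioc (ρ / (k+1)) ρ) := by
    intro i j hij
    apply Ioc_subset_Ioc _ le_rfl
    have hij' : ((i:ℝ)) + 1 ≤ ((j:ℝ)) + 1 := by
      have := (Nat.cast_le (α := ℝ)).mpr hij
      linarith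
    exact div_le_div_of_nonneg_left hρ0.le (by positivity) hij'
  have hunion : ⋃ k : ℕ, Ioc (ρ / (k+1)) ρ = Ioc (0:ℝ) ρ := by
    ext x
    simp only [mem_iUnion, mem_Ioc]
    constructor
    · rintro ⟨k, h1, h2⟩
      exact ⟨lt_trans (by positivity) h1, h2⟩
    · rintro ⟨h1, h2⟩
      obtain ⟨k, hk⟩ := exists_nat_gt (ρ / x)
      refine ⟨k, ?_, h2⟩
      rw [div_lt_iff₀ (by positivity)]
      have h9 : ρ / x < (k:ℝ) + 1 := lt_trans hk (by linarith)
      calc ρ = ρ / x * x := by field_simp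
        _ < ((k:ℝ) + 1) * x := by exact mul_lt_mul_of_pos_right h9 h1
        _ = x * ((k:ℝ) + 1) := by ring
  have htendsto := tendsto_setIntegral_of_monotone (fun k => measurableSet_Ioc) hmono
    (by rw [hunion]; exact hψint)
  rw [hunion] at htendsto
  have hlim : c ^ p * ∫ r in Ioc (0:ℝ) ρ, ψ r ≤ Y := by
    have h10 : Filter.Tendsto (fun k : ℕ => c ^ p * ∫ r in Ioc (ρ / (k+1)) ρ, ψ r)
        Filter.atTop (nhds (c ^ p * ∫ r in Ioc (0:ℝ) ρ, ψ r)) := htendsto.const_mul _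
    exact le_of_tendsto h10 (Filter.Eventually.of_forall key)
  rw [hLHS]
  exact hlim

set_option maxHeartbeats 1000000 in
theorem improved_hardy_inequality (N : ℕ) (hN : 2 ≤ N) (p R : ℝ) (hp : 1 ≤ p)
    (hpN : p < N) (hR : 0 < R)
    (u : EuclideanSpace ℝ (Fin N) → ℝ)
    (hrad : ∃ v : ℝ → ℝ, ∀ x, u x = v ‖x‖)
    (hreg : ContDiff ℝ 1 u) (hsupp : HasCompactSupport u)
    (hsupp' : tsupport u ⊆ Metric.ball (0 : EuclideanSpace ℝ (Fin N)) R) :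
    (((N : ℝ) - p) / p) ^ p *
        ∫ x in Metric.ball (0 : EuclideanSpace ℝ (Fin N)) R,
          |u x| ^ p / (‖x‖ ^ p * (1 - (‖x‖ / R) ^ (((N : ℝ) - p) / (p - 1))) ^ p)
      ≤ ∫ x in Metric.ball (0 : EuclideanSpace ℝ (Fin N)) R, ‖fderiv ℝ u x‖ ^ p := by
  haveI : Nonempty (Fin N) := ⟨⟨0, by omega⟩⟩
  obtain ⟨v, hv⟩ := hrad
  rcases eq_or_lt_of_le hp with hp1 | hp1
  · -- p = 1 : the weight is identically 0 in Lean conventions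
    have hA : ∀ x : EuclideanSpace ℝ (Fin N),
        |u x| ^ p / (‖x‖ ^ p * (1 - (‖x‖ / R) ^ (((N : ℝ) - p) / (p - 1))) ^ p) = 0 := by
      intro x
      rw [← hp1]
      rw [show ((N : ℝ) - 1) / ((1:ℝ) - 1) = 0 by norm_num, Real.rpow_zero]
      simp
    have h1 : ∫ x in Metric.ball (0 : EuclideanSpace ℝ (Fin N)) R,
        |u x| ^ p / (‖x‖ ^ p * (1 - (‖x‖ / R) ^ (((N : ℝ) - p) / (p - 1))) ^ p) = 0 := by
      rw [setIntegral_congr_fun measurableSet_ball fun x _ => hA x]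
      simp
    rw [h1, mul_zero]
    apply setIntegral_nonneg measurableSet_ball
    intro x _
    exact Real.rpow_nonneg (norm_nonneg _) p
  · -- main case 1 < p
    have hp0 : (0:ℝ) < p := by linarith
    have hpN' : p < (N:ℝ) := hpN
    -- the radial profile along a fixed unit vector
    set y₀ : EuclideanSpace ℝ (Fin N) := EuclideanSpace.single (⟨0, by omega⟩ : Fin N) 1 with hy₀
    have hy₀n : ‖y₀‖ = 1 := by rw [hy₀, EuclideanSpace.norm_single]; norm_num
    set w : ℝ → ℝ := fun r => u (r • y₀) with hw
    have hwC : ContDiff ℝ 1 w := hreg.comp (contDiff_id.smul contDiff_const)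
    have huw : ∀ x, u x = w ‖x‖ := by
      intro x
      show u x = u (‖x‖ • y₀)
      rw [hv x, hv (‖x‖ • y₀), norm_smul, hy₀n, mul_one, Real.norm_eq_abs,
        abs_of_nonneg (norm_nonneg x)]
    -- a strictly smaller ball containing the support
    obtain ⟨ρ, hρmem, hρsub⟩ := exists_pos_lt_subset_ball hR (isClosed_tsupport u) hsupp'
    have hρ0 : 0 < ρ := hρmem.1
    have hρR : ρ < R := hρmem.2
    have hline : ∀ s : ℝ, ρ ≤ |s| → s • y₀ ∉ tsupport u := by
      intro s hs hmem
      have h2 := hρsub hmem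
      rw [mem_ball_zero_iff, norm_smul, hy₀n, mul_one, Real.norm_eq_abs] at h2
      exact absurd h2 (not_lt.mpr hs)
    have hw0 : ∀ r ≥ ρ, w r = 0 := by
      intro r hr
      show u (r • y₀) = 0
      exact image_eq_zero_of_notMem_tsupport
        (hline r (by rwa [abs_of_nonneg (le_trans hρ0.le hr)]))
    have hw0' : ∀ r ≥ ρ, deriv w r = 0 := by
      intro r hr
      have hopen : IsOpen {s : ℝ | s • y₀ ∉ tsupport u} :=
        (isClosed_tsupport u).isOpen_compl.preimage (continuous_id.smul continuous_const)
      have hmem : r ∈ {s : ℝ | s • y₀ ∉ tsupport u} :=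
        hline r (by rwa [abs_of_nonneg (le_trans hρ0.le hr)])
      have hev : w =ᶠ[nhds r] fun _ => 0 := by
        filter_upwards [hopen.mem_nhds hmem] with s hs
        show u (s • y₀) = 0
        exact image_eq_zero_of_notMem_tsupport hs
      rw [Filter.EventuallyEq.deriv_eq hev, deriv_const]
    -- the 1-dim integrands
    set α : ℝ := ((N:ℝ) - p) / (p - 1) with hα
    set f₁ : ℝ → ℝ := fun r => |w r| ^ p / (r ^ p * (1 - (r / R) ^ α) ^ p) with hf₁
    set f₂ : ℝ → ℝ := fun r => |deriv w r| ^ p with hf₂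
    -- pointwise bound for the derivative term
    have hptw : ∀ x : EuclideanSpace ℝ (Fin N), x ≠ 0 → f₂ ‖x‖ ≤ ‖fderiv ℝ u x‖ ^ p := by
      intro x hx
      have hnx : 0 < ‖x‖ := norm_pos_iff.2 hx
      set y : EuclideanSpace ℝ (Fin N) := ‖x‖⁻¹ • x with hy
      have hyn : ‖y‖ = 1 := norm_smul_inv_norm hx
      have hxy : ‖x‖ • y = x := by
        rw [hy, smul_smul, mul_inv_cancel₀ hnx.ne', one_smul]
      have hu : HasFDerivAt u (fderiv ℝ u x) (‖x‖ • y) := by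
        rw [hxy]
        exact (hreg.differentiable one_ne_zero x).hasFDerivAt
      have hs : HasDerivAt (fun s : ℝ => s • y) ((1:ℝ) • y) ‖x‖ :=
        (hasDerivAt_id _).smul_const y
      rw [one_smul] at hs
      have hd : HasDerivAt (fun s : ℝ => u (s • y)) ((fderiv ℝ u x) y) ‖x‖ :=
        hu.comp_hasDerivAt _ hs
      have hEq : w =ᶠ[nhds ‖x‖] fun s => u (s • y) := by
        filter_upwards [lt_mem_nhds hnx] with s hs'
        rw [huw (s • y), norm_smul, hyn, mul_one, Real.norm_eq_abs, abs_of_pos hs']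
      have hderiv_eq : deriv w ‖x‖ = (fderiv ℝ u x) y := by
        rw [Filter.EventuallyEq.deriv_eq hEq]
        exact hd.deriv
      have hle : |deriv w ‖x‖| ≤ ‖fderiv ℝ u x‖ := by
        rw [hderiv_eq, ← Real.norm_eq_abs]
        calc ‖(fderiv ℝ u x) y‖ ≤ ‖fderiv ℝ u x‖ * ‖y‖ := (fderiv ℝ u x).le_opNorm y
          _ = ‖fderiv ℝ u x‖ := by rw [hyn, mul_one]
      exact Real.rpow_le_rpow (abs_nonneg _) hle hp0.le
    -- continuity and integrability of the two comparison functions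
    have habsp : Continuous fun t : ℝ => |t| ^ p :=
      continuous_abs.rpow_const fun t => Or.inr hp0.le
    have hf₂c : Continuous fun x : EuclideanSpace ℝ (Fin N) => f₂ ‖x‖ := by
      have : Continuous f₂ := habsp.comp (hwC.continuous_deriv le_rfl)
      exact this.comp continuous_norm
    have hf₂supp : HasCompactSupport fun x : EuclideanSpace ℝ (Fin N) => f₂ ‖x‖ := by
      apply HasCompactSupport.intro (isCompact_closedBall (0 : EuclideanSpace ℝ (Fin N)) ρ)
      intro x hx
      rw [mem_closedBall_zero_iff, not_le] at hx
      rw [hf₂]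
      simp only
      rw [hw0' ‖x‖ hx.le, abs_zero, Real.zero_rpow hp0.ne']
    have hf₂int : Integrable fun x : EuclideanSpace ℝ (Fin N) => f₂ ‖x‖ :=
      hf₂c.integrable_of_hasCompactSupport hf₂supp
    have hBc : Continuous fun x : EuclideanSpace ℝ (Fin N) => ‖fderiv ℝ u x‖ ^ p :=
      ((hreg.continuous_fderiv one_ne_zero).norm).rpow_const fun x => Or.inr hp0.le
    have hfderiv0 : ∀ x : EuclideanSpace ℝ (Fin N), x ∉ tsupport u → fderiv ℝ u x = 0 := by
      intro x hx
      by_contra h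
      exact hx (support_fderiv_subset ℝ (Function.mem_support.2 h))
    have hBsupp : HasCompactSupport fun x : EuclideanSpace ℝ (Fin N) => ‖fderiv ℝ u x‖ ^ p := by
      apply HasCompactSupport.intro hsupp
      intro x hx
      rw [hfderiv0 x hx, norm_zero, Real.zero_rpow hp0.ne']
    have hBint : Integrable fun x : EuclideanSpace ℝ (Fin N) => ‖fderiv ℝ u x‖ ^ p :=
      hBc.integrable_of_hasCompactSupport hBsupp
    -- step 1: extend LHS integral to the whole space
    have step1 : ∫ x in Metric.ball (0 : EuclideanSpace ℝ (Fin N)) R,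
        |u x| ^ p / (‖x‖ ^ p * (1 - (‖x‖ / R) ^ α) ^ p)
        = ∫ x : EuclideanSpace ℝ (Fin N), f₁ ‖x‖ := by
      rw [setIntegral_eq_integral_of_forall_compl_eq_zero]
      · apply MeasureTheory.integral_congr_ae
        filter_upwards with x
        rw [hf₁]
        simp only
        rw [huw x]
      · intro x hx
        have hx' : x ∉ tsupport u := fun h => hx (hsupp' h)
        rw [image_eq_zero_of_notMem_tsupport hx', abs_zero, Real.zero_rpow hp0.ne', zero_div]
    -- step 7: shrink RHS integral to the ball
    have step7 : ∫ x in Metric.ball (0 : EuclideanSpace ℝ (Fin N)) R, ‖fderiv ℝ u x‖ ^ p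
        = ∫ x : EuclideanSpace ℝ (Fin N), ‖fderiv ℝ u x‖ ^ p := by
      apply setIntegral_eq_integral_of_forall_compl_eq_zero
      intro x hx
      have hx' : x ∉ tsupport u := fun h => hx (hsupp' h)
      rw [hfderiv0 x hx', norm_zero, Real.zero_rpow hp0.ne']
    -- polar coordinates
    have hdim : Module.finrank ℝ (EuclideanSpace ℝ (Fin N)) = N := finrank_euclideanSpace_fin
    have polar₁ := MeasureTheory.integral_fun_norm_addHaar
      (volume : Measure (EuclideanSpace ℝ (Fin N))) f₁
    have polar₂ := MeasureTheory.integral_fun_norm_addHaar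
      (volume : Measure (EuclideanSpace ℝ (Fin N))) f₂
    rw [hdim] at polar₁ polar₂
    -- a.e. comparison for the gradient term
    have h0ae : ∀ᵐ x : EuclideanSpace ℝ (Fin N) ∂volume, x ≠ 0 := by
      rw [ae_iff]
      simpa using measure_singleton (0 : EuclideanSpace ℝ (Fin N))
    have step6 : ∫ x : EuclideanSpace ℝ (Fin N), f₂ ‖x‖
        ≤ ∫ x : EuclideanSpace ℝ (Fin N), ‖fderiv ℝ u x‖ ^ p := by
      apply integral_mono_ae hf₂int hBint
      filter_upwards [h0ae] with x hx
      exact hptw x hx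
    -- the 1-dimensional inequality
    have h1d := oneD_hardy hN hp1 hpN' hR hρ0 hρR hwC hw0 hw0'
    -- assemble
    rw [step1, step7, polar₁]
    calc (((N:ℝ) - p) / p) ^ p *
          (N • ((volume (Metric.ball (0:EuclideanSpace ℝ (Fin N)) 1)).toReal •
            ∫ y in Ioi (0:ℝ), y ^ (N - 1) • f₁ y))
        = (N * (volume (Metric.ball (0:EuclideanSpace ℝ (Fin N)) 1)).toReal) *
            ((((N:ℝ) - p) / p) ^ p * ∫ y in Ioi (0:ℝ), y ^ (N - 1) • f₁ y) := by
          rw [nsmul_eq_mul, smul_eq_mul]; ring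
      _ ≤ (N * (volume (Metric.ball (0:EuclideanSpace ℝ (Fin N)) 1)).toReal) *
            ∫ y in Ioi (0:ℝ), y ^ (N - 1) • f₂ y := by
          apply mul_le_mul_of_nonneg_left _ (by positivity)
          exact h1d
      _ = ∫ x : EuclideanSpace ℝ (Fin N), f₂ ‖x‖ := by
          rw [polar₂, nsmul_eq_mul, smul_eq_mul, measureReal_def]; ring
      _ ≤ _ := step6
end

section
/- Let 1 ≤ p < m ≤ N and let u : ℝ^m → ℝ and w : ℝ^N → ℝ be radial functions related by u(r) = w(t) where r^{-(m-p)/(p-1)} = t^{-(N-p)/(p-1)}. Then ∫_{ℝ^N} |∇w|^p dy = (ω_{N-1}/ω_{m-1}) · ((N-p)/(m-p))^{p-1} · ∫_{ℝ^m} |∇u|^p dx. -/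
open MeasureTheory Real

lemma hasFDerivAt_norm' {E : Type*} [NormedAddCommGroup E] [InnerProductSpace ℝ E]
    {x : E} (hx : x ≠ 0) :
    HasFDerivAt (fun y : E => ‖y‖) (‖x‖⁻¹ • innerSL ℝ x) x := by
  have hx' : ‖x‖ ≠ 0 := norm_ne_zero_iff.2 hx
  have h2 : (‖x‖ ^ 2 : ℝ) ≠ 0 := pow_ne_zero _ hx'
  have hsq := (hasStrictFDerivAt_norm_sq x).hasFDerivAt
  have hs := (Real.hasDerivAt_sqrt h2).comp_hasFDerivAt x hsq
  have heq : (fun y : E => Real.sqrt (‖y‖ ^ 2)) = fun y : E => ‖y‖ := by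
    funext y; exact Real.sqrt_sq (norm_nonneg y)
  rw [show ((fun x => √x) ∘ fun y : E => ‖y‖ ^ 2) = fun y : E => ‖y‖ from heq] at hs
  refine hs.congr_fderiv ?_
  ext y
  have hss : Real.sqrt (‖x‖ ^ 2) = ‖x‖ := Real.sqrt_sq (norm_nonneg x)
  simp only [ContinuousLinearMap.coe_smul', Pi.smul_apply, smul_eq_mul, hss, two_smul,
    ContinuousLinearMap.add_apply]
  field_simp
  ring

lemma norm_fderiv_radial {E : Type*} [NormedAddCommGroup E] [InnerProductSpace ℝ E]
    (V : E → ℝ) (v : ℝ → ℝ) (hV : ∀ x, V x = v ‖x‖) {x : E} (hx : x ≠ 0)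
    {c : ℝ} (hv : HasDerivAt v c ‖x‖) : ‖fderiv ℝ V x‖ = |c| := by
  have hx' : ‖x‖ ≠ 0 := norm_ne_zero_iff.2 hx
  have hn := hasFDerivAt_norm' hx
  have hc : HasFDerivAt V (c • (‖x‖⁻¹ • innerSL ℝ x)) x := by
    have h := hv.comp_hasFDerivAt x hn
    have : V = fun y => v ‖y‖ := funext hV
    rw [this]; exact h
  rw [hc.fderiv, norm_smul, norm_smul, innerSL_apply_norm, Real.norm_eq_abs,
    Real.norm_eq_abs, abs_inv, abs_of_nonneg (norm_nonneg x), inv_mul_cancel₀ hx', mul_one]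

theorem dimension_reduction_gradient (m N : ℕ) (p : ℝ) (hp : 1 < p)
    (hpm : p < m) (hmN : m ≤ N) (u w : ℝ → ℝ)
    (U : EuclideanSpace ℝ (Fin m) → ℝ) (W : EuclideanSpace ℝ (Fin N) → ℝ)
    (hU : ∀ x, U x = u ‖x‖) (hW : ∀ y, W y = w ‖y‖)
    (hUreg : ContDiff ℝ 1 U) (hUsupp : HasCompactSupport U)
    (hrel : ∀ r t : ℝ, 0 < r → 0 < t →
      r ^ (-(((m : ℝ) - p) / (p - 1))) = t ^ (-(((N : ℝ) - p) / (p - 1))) → u r = w t) :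
    ∫ y : EuclideanSpace ℝ (Fin N), ‖fderiv ℝ W y‖ ^ p
      = (((N : ℝ) * π ^ ((N : ℝ) / 2) / Real.Gamma (1 + (N : ℝ) / 2)) /
          ((m : ℝ) * π ^ ((m : ℝ) / 2) / Real.Gamma (1 + (m : ℝ) / 2))) *
        (((N : ℝ) - p) / ((m : ℝ) - p)) ^ (p - 1) *
        ∫ x : EuclideanSpace ℝ (Fin m), ‖fderiv ℝ U x‖ ^ p := by
  have hm1 : (1 : ℝ) < (m : ℝ) := hp.trans hpm
  have hm2 : 2 ≤ m := by exact_mod_cast Nat.succ_le_of_lt (by exact_mod_cast hm1)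
  have hN2 : 2 ≤ N := le_trans hm2 hmN
  have hmp : (0 : ℝ) < (m : ℝ) - p := by linarith
  have hNp : (0 : ℝ) < (N : ℝ) - p := by
    have : (m : ℝ) ≤ N := by exact_mod_cast hmN
    linarith
  have hp1 : (0 : ℝ) < p - 1 := by linarith
  set γ : ℝ := ((N : ℝ) - p) / ((m : ℝ) - p) with hγdef
  have hγ : 0 < γ := div_pos hNp hmp
  haveI : Nonempty (Fin m) := ⟨⟨0, by omega⟩⟩
  haveI : Nonempty (Fin N) := ⟨⟨0, by omega⟩⟩
  haveI : Nontrivial (EuclideanSpace ℝ (Fin m)) := by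
    refine ⟨EuclideanSpace.single (⟨0, by omega⟩ : Fin m) (1:ℝ), 0, ?_⟩
    intro h
    have := congrArg (fun z => ‖z‖) h
    simp [EuclideanSpace.norm_single] at this
  haveI : Nontrivial (EuclideanSpace ℝ (Fin N)) := by
    refine ⟨EuclideanSpace.single (⟨0, by omega⟩ : Fin N) (1:ℝ), 0, ?_⟩
    intro h
    have := congrArg (fun z => ‖z‖) h
    simp [EuclideanSpace.norm_single] at this
  -- the one-dimensional profile
  set e : EuclideanSpace ℝ (Fin m) := EuclideanSpace.single (⟨0, by omega⟩ : Fin m) (1:ℝ) with he_def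
  have he : ‖e‖ = 1 := by simp [he_def, EuclideanSpace.norm_single]
  set v : ℝ → ℝ := fun s => U (s • e) with hv_def
  have hvreg : ContDiff ℝ 1 v := hUreg.comp ((contDiff_id (E := ℝ)).smul contDiff_const)
  have hv_eq : ∀ s : ℝ, 0 ≤ s → v s = u s := by
    intro s hs
    rw [hv_def]
    simp only
    rw [hU, norm_smul, he, Real.norm_eq_abs, abs_of_nonneg hs, mul_one]
  set f : ℝ → ℝ := deriv v with hf_def
  have hdv : ∀ s : ℝ, HasDerivAt v (f s) s := fun s =>
    ((hvreg.differentiable one_ne_zero) s).hasDerivAt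
  -- relation between w and v
  have hwv : ∀ t : ℝ, 0 < t → w t = v (t ^ γ) := by
    intro t ht
    have hr : (0 : ℝ) < t ^ γ := Real.rpow_pos_of_pos ht γ
    have key : (t ^ γ) ^ (-(((m : ℝ) - p) / (p - 1))) = t ^ (-(((N : ℝ) - p) / (p - 1))) := by
      rw [← Real.rpow_mul ht.le]
      congr 1
      rw [hγdef, mul_neg, neg_inj, div_mul_div_cancel₀ hmp.ne']
    rw [← hrel (t ^ γ) t hr ht key, hv_eq _ hr.le]
  -- gradient profiles
  set gU : ℝ → ℝ := fun r => |f r| ^ p with hgU_def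
  set gW : ℝ → ℝ := fun t => |f (t ^ γ) * (γ * t ^ (γ - 1))| ^ p with hgW_def
  have hgradU : ∀ x : EuclideanSpace ℝ (Fin m), x ≠ 0 → ‖fderiv ℝ U x‖ ^ p = gU ‖x‖ := by
    intro x hx
    have hxpos : 0 < ‖x‖ := norm_pos_iff.2 hx
    have hud : HasDerivAt u (f ‖x‖) ‖x‖ := by
      refine (hdv ‖x‖).congr_of_eventuallyEq ?_
      filter_upwards [isOpen_Ioi.eventually_mem hxpos] with s hs
      exact (hv_eq s (le_of_lt hs)).symm
    rw [norm_fderiv_radial U u hU hx hud]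
  have hgradW : ∀ y : EuclideanSpace ℝ (Fin N), y ≠ 0 → ‖fderiv ℝ W y‖ ^ p = gW ‖y‖ := by
    intro y hy
    have hypos : 0 < ‖y‖ := norm_pos_iff.2 hy
    have hcomp : HasDerivAt (fun t : ℝ => v (t ^ γ)) (f (‖y‖ ^ γ) * (γ * ‖y‖ ^ (γ - 1))) ‖y‖ :=
      by have h := (hdv (‖y‖ ^ γ)).comp ‖y‖ (Real.hasDerivAt_rpow_const (p := γ) (Or.inl hypos.ne')); exact h
    have hwd : HasDerivAt w (f (‖y‖ ^ γ) * (γ * ‖y‖ ^ (γ - 1))) ‖y‖ := by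
      refine hcomp.congr_of_eventuallyEq ?_
      filter_upwards [isOpen_Ioi.eventually_mem hypos] with s hs
      exact hwv s hs
    rw [norm_fderiv_radial W w hW hy hwd]
  -- pass to polar coordinates
  have hneN : ∀ᵐ (y : EuclideanSpace ℝ (Fin N)), y ≠ 0 := by
    rw [ae_iff]
    simp only [ne_eq, not_not, Set.setOf_eq_eq_singleton]
    exact measure_singleton 0
  have hnem : ∀ᵐ (x : EuclideanSpace ℝ (Fin m)), x ≠ 0 := by
    rw [ae_iff]
    simp only [ne_eq, not_not, Set.setOf_eq_eq_singleton]
    exact measure_singleton 0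
  have hIN : ∫ y : EuclideanSpace ℝ (Fin N), ‖fderiv ℝ W y‖ ^ p
      = (N : ℝ) * (volume (Metric.ball (0 : EuclideanSpace ℝ (Fin N)) 1)).toReal
        * ∫ t in Set.Ioi (0:ℝ), t ^ (N - 1) * gW t := by
    rw [integral_congr_ae (hneN.mono fun y hy => hgradW y hy),
      integral_fun_norm_addHaar volume gW]
    simp only [finrank_euclideanSpace_fin, nsmul_eq_mul, smul_eq_mul, mul_assoc, measureReal_def]
  have hIm : ∫ x : EuclideanSpace ℝ (Fin m), ‖fderiv ℝ U x‖ ^ p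
      = (m : ℝ) * (volume (Metric.ball (0 : EuclideanSpace ℝ (Fin m)) 1)).toReal
        * ∫ r in Set.Ioi (0:ℝ), r ^ (m - 1) * gU r := by
    rw [integral_congr_ae (hnem.mono fun x hx => hgradU x hx),
      integral_fun_norm_addHaar volume gU]
    simp only [finrank_euclideanSpace_fin, nsmul_eq_mul, smul_eq_mul, mul_assoc, measureReal_def]
  -- one-dimensional change of variables
  have hsub : ∫ t in Set.Ioi (0:ℝ), t ^ (N - 1) * gW t
      = γ ^ (p - 1) * ∫ r in Set.Ioi (0:ℝ), r ^ (m - 1) * gU r := by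
    rw [← integral_comp_rpow_Ioi (fun r => r ^ (m - 1) * gU r) hγ.ne', ← smul_eq_mul,
      ← integral_smul]
    refine setIntegral_congr_fun measurableSet_Ioi ?_
    intro t ht
    have ht : (0:ℝ) < t := ht
    have hpos : 0 < γ * t ^ (γ - 1) := mul_pos hγ (Real.rpow_pos_of_pos ht _)
    have h1 : |f (t ^ γ) * (γ * t ^ (γ - 1))| = |f (t ^ γ)| * (γ * t ^ (γ - 1)) := by
      rw [abs_mul, abs_of_pos hpos]
    have h2 : (|f (t ^ γ)| * (γ * t ^ (γ - 1))) ^ p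
        = |f (t ^ γ)| ^ p * (γ ^ p * t ^ ((γ - 1) * p)) := by
      rw [Real.mul_rpow (abs_nonneg _) (by positivity),
        Real.mul_rpow hγ.le (Real.rpow_nonneg ht.le _), Real.rpow_mul ht.le]
    have h5 : (t:ℝ) ^ (N - 1) = t ^ ((N:ℝ) - 1) := by
      rw [← Real.rpow_natCast t (N - 1), Nat.cast_sub (by omega), Nat.cast_one]
    have h6 : (t ^ γ) ^ (m - 1) = t ^ (γ * ((m:ℝ) - 1)) := by
      rw [← Real.rpow_natCast (t ^ γ) (m - 1), ← Real.rpow_mul ht.le,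
        Nat.cast_sub (by omega), Nat.cast_one]
    have h7 : γ ^ p = γ ^ (p - 1) * γ := by
      rw [Real.rpow_sub hγ, Real.rpow_one, div_mul_cancel₀ _ hγ.ne']
    have hT : t ^ ((N:ℝ) - 1) * t ^ ((γ - 1) * p) = t ^ (γ - 1) * t ^ (γ * ((m:ℝ) - 1)) := by
      rw [← Real.rpow_add ht, ← Real.rpow_add ht]
      congr 1
      rw [hγdef]
      field_simp
      ring
    simp only [smul_eq_mul, hgW_def, hgU_def, abs_of_pos hγ]
    rw [h1, h2, h5, h6, h7]
    linear_combination (|f (t ^ γ)| ^ p * (γ ^ (p - 1) * γ)) * hT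
  -- volume of balls
  have hvol : ∀ (k : ℕ), k ≠ 0 →
      (volume (Metric.ball (0 : EuclideanSpace ℝ (Fin k)) 1)).toReal
        = π ^ ((k : ℝ) / 2) / Real.Gamma (1 + (k : ℝ) / 2) := by
    intro k hk
    haveI : Nonempty (Fin k) := ⟨⟨0, Nat.pos_of_ne_zero hk⟩⟩
    rw [EuclideanSpace.volume_ball]
    simp only [Fintype.card_fin]
    have hΓ : 0 < Real.Gamma ((k:ℝ) / 2 + 1) :=
      Real.Gamma_pos_of_pos (by positivity)
    rw [ENNReal.ofReal_one, one_pow, one_mul,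
      ENNReal.toReal_ofReal (div_nonneg (pow_nonneg (Real.sqrt_nonneg _) _) hΓ.le)]
    have h1 : Real.sqrt π ^ k = π ^ ((k:ℝ) / 2) := by
      rw [Real.sqrt_eq_rpow, ← Real.rpow_natCast (π ^ (1/2:ℝ)) k, ← Real.rpow_mul pi_pos.le]
      congr 1
      ring
    rw [h1, add_comm ((k:ℝ) / 2) 1]
  -- put everything together
  rw [hIN, hIm, hsub, hvol N (by omega), hvol m (by omega)]
  have hπm : (0:ℝ) < π ^ ((m:ℝ) / 2) := Real.rpow_pos_of_pos pi_pos _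
  have hπN : (0:ℝ) < π ^ ((N:ℝ) / 2) := Real.rpow_pos_of_pos pi_pos _
  have hΓm : (0:ℝ) < Real.Gamma (1 + (m:ℝ) / 2) := Real.Gamma_pos_of_pos (by positivity)
  have hΓN : (0:ℝ) < Real.Gamma (1 + (N:ℝ) / 2) := Real.Gamma_pos_of_pos (by positivity)
  have hm0 : ((m:ℝ)) ≠ 0 := Nat.cast_ne_zero.2 (by omega)
  field_simp
end

section
/- Let 1 ≤ p < m ≤ N and let radial u on ℝ^m and w on ℝ^N be related by u(r) = w(t) with r^{-(m-p)/(p-1)} = t^{-(N-p)/(p-1)}. Then ∫_{ℝ^N} |w(y)|^{Np/(N-p)} dy = (ω_{N-1}/ω_{m-1}) · ((m-p)/(N-p)) · ∫_{ℝ^m} |u(x)|^{Np/(N-p)} / |x|^{((N-m)/(N-p))p} dx. -/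
open MeasureTheory Real

lemma radial_integral_euclidean (n : ℕ) (hn : 1 ≤ n) (f : ℝ → ℝ) :
    ∫ x : EuclideanSpace ℝ (Fin n), f ‖x‖
      = ((n : ℝ) * π ^ ((n : ℝ) / 2) / Real.Gamma (1 + (n : ℝ) / 2)) *
        ∫ t in Set.Ioi (0 : ℝ), t ^ ((n : ℝ) - 1) * f t := by
  haveI : Nonempty (Fin n) := Fin.pos_iff_nonempty.mp hn
  rw [MeasureTheory.integral_fun_norm_addHaar volume f]
  have hvol : (volume (Metric.ball (0 : EuclideanSpace ℝ (Fin n)) 1)).toReal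
      = π ^ ((n : ℝ) / 2) / Real.Gamma (1 + (n : ℝ) / 2) := by
    rw [EuclideanSpace.volume_ball]
    have hsqrt : Real.sqrt π ^ (Fintype.card (Fin n)) = π ^ ((n : ℝ) / 2) := by
      rw [Fintype.card_fin, Real.sqrt_eq_rpow, ← Real.rpow_natCast (π ^ ((1:ℝ)/2)) n,
        ← Real.rpow_mul pi_pos.le]
      ring_nf
    have hΓ : (0 : ℝ) < Real.Gamma ((Fintype.card (Fin n) : ℝ) / 2 + 1) := by
      apply Real.Gamma_pos_of_pos
      positivity
    rw [ENNReal.ofReal_one, one_pow, one_mul, ENNReal.toReal_ofReal (by positivity),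
      hsqrt, Fintype.card_fin, add_comm]
  rw [MeasureTheory.measureReal_def, hvol]
  have hfr : Module.finrank ℝ (EuclideanSpace ℝ (Fin n)) = n := finrank_euclideanSpace_fin
  rw [hfr]
  have hcast : ∀ t : ℝ, t ^ ((n : ℝ) - 1) = t ^ (n - 1 : ℕ) := by
    intro t
    rw [← Real.rpow_natCast t (n - 1), Nat.cast_sub hn, Nat.cast_one]
  simp_rw [hcast, nsmul_eq_mul, smul_eq_mul]
  ring

theorem dimension_reduction_critical_norm (m N : ℕ) (p : ℝ) (hp : 1 < p)
    (hpm : p < m) (hmN : m ≤ N) (u w : ℝ → ℝ)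
    (U : EuclideanSpace ℝ (Fin m) → ℝ) (W : EuclideanSpace ℝ (Fin N) → ℝ)
    (hU : ∀ x, U x = u ‖x‖) (hW : ∀ y, W y = w ‖y‖)
    (hUreg : ContDiff ℝ 1 U) (hUsupp : HasCompactSupport U)
    (hU0 : (0 : EuclideanSpace ℝ (Fin m)) ∉ tsupport U)
    (hrel : ∀ r t : ℝ, 0 < r → 0 < t →
      r ^ (-(((m : ℝ) - p) / (p - 1))) = t ^ (-(((N : ℝ) - p) / (p - 1))) → u r = w t) :
    ∫ y : EuclideanSpace ℝ (Fin N), |W y| ^ ((N : ℝ) * p / ((N : ℝ) - p))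
      = (((N : ℝ) * π ^ ((N : ℝ) / 2) / Real.Gamma (1 + (N : ℝ) / 2)) /
          ((m : ℝ) * π ^ ((m : ℝ) / 2) / Real.Gamma (1 + (m : ℝ) / 2))) *
        (((m : ℝ) - p) / ((N : ℝ) - p)) *
        ∫ x : EuclideanSpace ℝ (Fin m),
          |U x| ^ ((N : ℝ) * p / ((N : ℝ) - p)) /
            ‖x‖ ^ ((((N : ℝ) - m) / ((N : ℝ) - p)) * p) := by
  set q : ℝ := (N : ℝ) * p / ((N : ℝ) - p) with hq
  set β : ℝ := (((N : ℝ) - m) / ((N : ℝ) - p)) * p with hβ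
  set α : ℝ := ((m : ℝ) - p) / ((N : ℝ) - p) with hα
  have hpm' : p < (m : ℝ) := hpm
  have hmN' : (m : ℝ) ≤ (N : ℝ) := Nat.cast_le.mpr hmN
  have hp1 : (0 : ℝ) < p - 1 := by linarith
  have hNp : (0 : ℝ) < (N : ℝ) - p := by linarith
  have hmp : (0 : ℝ) < (m : ℝ) - p := by linarith
  have hαpos : 0 < α := div_pos hmp hNp
  have hNp2 : -p + (N : ℝ) ≠ 0 := by intro h; nlinarith
  have hm1 : 1 ≤ m := by
    by_contra h
    push_neg at h
    interval_cases m <;> simp_all <;> linarith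
  have hN1 : 1 ≤ N := le_trans hm1 hmN
  -- reduce both sides to radial integrals
  have hWrad : (∫ y : EuclideanSpace ℝ (Fin N), |W y| ^ q)
      = ∫ y : EuclideanSpace ℝ (Fin N), (fun t => |w t| ^ q) ‖y‖ := by
    simp_rw [hW]
  have hUrad : (∫ x : EuclideanSpace ℝ (Fin m), |U x| ^ q / ‖x‖ ^ β)
      = ∫ x : EuclideanSpace ℝ (Fin m), (fun t => |u t| ^ q / t ^ β) ‖x‖ := by
    simp_rw [hU]
  rw [hWrad, hUrad, radial_integral_euclidean N hN1 (fun t => |w t| ^ q),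
    radial_integral_euclidean m hm1 (fun t => |u t| ^ q / t ^ β)]
  -- key one-dimensional substitution t = r ^ α
  have hkey : (∫ t in Set.Ioi (0 : ℝ), t ^ ((N : ℝ) - 1) * |w t| ^ q)
      = α * ∫ r in Set.Ioi (0 : ℝ), r ^ ((m : ℝ) - 1) * (|u r| ^ q / r ^ β) := by
    rw [← MeasureTheory.integral_comp_rpow_Ioi
      (fun t => t ^ ((N : ℝ) - 1) * |w t| ^ q) hαpos.ne', ← MeasureTheory.integral_const_mul α]
    apply MeasureTheory.setIntegral_congr_fun measurableSet_Ioi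
    intro r hr
    have hr' : (0 : ℝ) < r := hr
    have hrα : (0 : ℝ) < r ^ α := Real.rpow_pos_of_pos hr' α
    have huw : u r = w (r ^ α) := by
      apply hrel r (r ^ α) hr' hrα
      rw [← Real.rpow_mul hr'.le]
      congr 1
      rw [hα]
      field_simp
    simp only [smul_eq_mul]
    have hA : |w (r ^ α)| ^ q = |u r| ^ q := by rw [← huw]
    have hexp : (r ^ α) ^ ((N : ℝ) - 1) = r ^ (α * ((N : ℝ) - 1)) :=
      (Real.rpow_mul hr'.le _ _).symm
    have hdiv : |u r| ^ q / r ^ β = |u r| ^ q * r ^ (-β) := by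
      rw [Real.rpow_neg hr'.le, div_eq_mul_inv]
    have hpow : r ^ (α - 1) * r ^ (α * ((N : ℝ) - 1)) = r ^ ((m : ℝ) - 1) * r ^ (-β) := by
      rw [← Real.rpow_add hr', ← Real.rpow_add hr']
      congr 1
      rw [hα, hβ]
      field_simp
      ring
    rw [abs_of_pos hαpos, hexp, hA, hdiv]
    linear_combination α * |u r| ^ q * hpow
  rw [hkey]
  have hCm : (0 : ℝ) < (m : ℝ) * π ^ ((m : ℝ) / 2) / Real.Gamma (1 + (m : ℝ) / 2) := by
    have h1 : (0 : ℝ) < (m : ℝ) := by exact_mod_cast hm1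
    have h2 : (0 : ℝ) < Real.Gamma (1 + (m : ℝ) / 2) := by
      apply Real.Gamma_pos_of_pos; positivity
    positivity
  field_simp
end

section
/- Fix 1 ≤ p < m. Then the limit as N → ∞ of S_{N,p} · (ω_{m-1}/ω_{N-1})^{p/N} · ((m-p)/(N-p))^{p - p/N} equals ((m-p)/p)^p, where S_{N,p} = π^{p/2} N ((N-p)/(p-1))^{p-1} (Γ(N/p)Γ(N+1-N/p)/(Γ(N)Γ(1+N/2)))^{p/N} and ω_{k-1} = kπ^{k/2}/Γ(1+k/2). -/
open Real Filter Topology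

lemma helper1 (n : ℕ) (hn : 1 ≤ n) : ((n : ℝ) + 1) ^ n ≤ Real.exp 1 * (n : ℝ) ^ n := by
  have hn0 : (0:ℝ) < n := by exact_mod_cast hn
  have h1 : (n:ℝ) + 1 ≤ Real.exp (1 / n) * n := by
    have := Real.add_one_le_exp (1 / (n:ℝ))
    calc (n:ℝ) + 1 = (1/(n:ℝ) + 1) * n := by field_simp; ring
    _ ≤ Real.exp (1/(n:ℝ)) * n := by nlinarith [Real.add_one_le_exp (1/(n:ℝ))]
  calc ((n:ℝ)+1)^n ≤ (Real.exp (1/n) * n)^n := by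
        apply pow_le_pow_left₀ (by positivity) h1
  _ = Real.exp (1/n) ^ n * (n:ℝ)^n := mul_pow _ _ _
  _ = Real.exp 1 * (n:ℝ)^n := by
        rw [← Real.exp_nat_mul]
        congr 2
        field_simp

lemma helper2 (n : ℕ) (hn : 1 ≤ n) : Real.exp 1 * (n:ℝ)^(n+1) ≤ ((n : ℝ) + 1) ^ (n+1) := by
  have hn0 : (0:ℝ) < n := by exact_mod_cast hn
  have h1 : Real.exp (1/((n:ℝ)+1)) * n ≤ (n:ℝ) + 1 := by
    have h2 := Real.add_one_le_exp (-(1 / ((n:ℝ)+1)))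
    have h3 : (0:ℝ) < (n:ℝ)/((n:ℝ)+1) := by positivity
    have h4 : -(1 / ((n:ℝ)+1)) + 1 = (n:ℝ)/((n:ℝ)+1) := by field_simp; ring
    rw [h4] at h2
    have h5 : Real.exp (1/((n:ℝ)+1)) ≤ ((n:ℝ)+1)/(n:ℝ) := by
      rw [Real.exp_neg] at h2
      rw [le_div_iff₀ hn0]
      have he : 0 < Real.exp (1/((n:ℝ)+1)) := Real.exp_pos _
      rw [le_inv_comm₀ h3 he] at h2
      calc Real.exp (1/((n:ℝ)+1)) * n ≤ (((n:ℝ)+1)/(n:ℝ)) * n := by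
            have : ((n:ℝ)/((n:ℝ)+1))⁻¹ = ((n:ℝ)+1)/(n:ℝ) := by rw [inv_div]
            nlinarith [h2.trans_eq this]
      _ = (n:ℝ)+1 := by field_simp
    calc Real.exp (1/((n:ℝ)+1)) * n ≤ (((n:ℝ)+1)/(n:ℝ)) * n := by nlinarith
    _ = (n:ℝ) + 1 := by field_simp
  calc Real.exp 1 * (n:ℝ)^(n+1) = (Real.exp (1/((n:ℝ)+1)))^(n+1) * (n:ℝ)^(n+1) := by
        rw [← Real.exp_nat_mul]; congr 2; push_cast; field_simp
  _ = (Real.exp (1/((n:ℝ)+1)) * n)^(n+1) := (mul_pow _ _ _).symm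
  _ ≤ ((n:ℝ)+1)^(n+1) := pow_le_pow_left₀ (by positivity) h1 _

lemma fb_low : ∀ n : ℕ, 1 ≤ n → Real.exp 1 * (n:ℝ)^n ≤ (n.factorial : ℝ) * Real.exp 1 ^ n := by
  intro n
  induction n with
  | zero => omega
  | succ k ih =>
    intro _
    rcases Nat.eq_zero_or_pos k with hk | hk
    · subst hk; simp
    · have IH := ih hk
      have hk0 : (0:ℝ) < k := by exact_mod_cast hk
      have he : (0:ℝ) < Real.exp 1 := Real.exp_pos 1
      have h1 := helper1 k hk
      have key : Real.exp 1 * ((k:ℝ)+1)^(k+1) ≤ ((k:ℝ)+1) * (Real.exp 1 * (k:ℝ)^k) * Real.exp 1 := by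
        calc Real.exp 1 * ((k:ℝ)+1)^(k+1) = (((k:ℝ)+1)^k * Real.exp 1) * ((k:ℝ)+1) := by ring
        _ ≤ ((Real.exp 1 * (k:ℝ)^k) * Real.exp 1) * ((k:ℝ)+1) := by
              have := mul_le_mul_of_nonneg_right (mul_le_mul_of_nonneg_right h1 he.le)
                (by positivity : (0:ℝ) ≤ (k:ℝ)+1)
              linarith
        _ = ((k:ℝ)+1) * (Real.exp 1 * (k:ℝ)^k) * Real.exp 1 := by ring
      have hfac : ((k+1).factorial : ℝ) = ((k:ℝ)+1) * (k.factorial : ℝ) := by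
        push_cast [Nat.factorial_succ]; ring
      push_cast
      rw [hfac]
      calc Real.exp 1 * ((k:ℝ)+1)^(k+1) ≤ ((k:ℝ)+1) * (Real.exp 1 * (k:ℝ)^k) * Real.exp 1 := key
      _ ≤ ((k:ℝ)+1) * ((k.factorial : ℝ) * Real.exp 1 ^ k) * Real.exp 1 := by
            have := mul_le_mul_of_nonneg_left IH (by positivity : (0:ℝ) ≤ (k:ℝ)+1)
            nlinarith
      _ = ((k:ℝ)+1) * (k.factorial : ℝ) * Real.exp 1 ^ (k+1) := by ring

lemma fb_up : ∀ n : ℕ, 1 ≤ n → (n.factorial : ℝ) * Real.exp 1 ^ n ≤ Real.exp 1 * (n:ℝ) * (n:ℝ)^n := by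
  intro n
  induction n with
  | zero => omega
  | succ k ih =>
    intro _
    rcases Nat.eq_zero_or_pos k with hk | hk
    · subst hk; simp
    · have IH := ih hk
      have hk0 : (0:ℝ) < k := by exact_mod_cast hk
      have he : (0:ℝ) < Real.exp 1 := Real.exp_pos 1
      have h2 := helper2 k hk
      have hfac : ((k+1).factorial : ℝ) = ((k:ℝ)+1) * (k.factorial : ℝ) := by
        push_cast [Nat.factorial_succ]; ring
      push_cast
      rw [hfac]
      calc ((k:ℝ)+1) * (k.factorial : ℝ) * Real.exp 1 ^ (k+1)
          = ((k:ℝ)+1) * ((k.factorial : ℝ) * Real.exp 1 ^ k) * Real.exp 1 := by ring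
      _ ≤ ((k:ℝ)+1) * (Real.exp 1 * (k:ℝ) * (k:ℝ)^k) * Real.exp 1 := by
            have := mul_le_mul_of_nonneg_left IH (by positivity : (0:ℝ) ≤ (k:ℝ)+1)
            nlinarith
      _ = ((k:ℝ)+1) * Real.exp 1 * (Real.exp 1 * (k:ℝ)^(k+1)) := by ring
      _ ≤ ((k:ℝ)+1) * Real.exp 1 * ((k:ℝ)+1)^(k+1) := by
            have := mul_le_mul_of_nonneg_left h2 (by positivity : (0:ℝ) ≤ ((k:ℝ)+1) * Real.exp 1)
            linarith
      _ = Real.exp 1 * ((k:ℝ)+1) * ((k:ℝ)+1)^(k+1) := by ring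

lemma logfac_low (n : ℕ) (hn : 1 ≤ n) :
    1 + ((n:ℝ) * Real.log n - n) ≤ Real.log (n.factorial : ℝ) := by
  have hn0 : (0:ℝ) < n := by exact_mod_cast hn
  have hf : (0:ℝ) < (n.factorial : ℝ) := by exact_mod_cast n.factorial_pos
  have h := Real.log_le_log (by positivity) (fb_low n hn)
  rw [Real.log_mul (by positivity) (by positivity), Real.log_pow, Real.log_mul (by positivity)
    (by positivity), Real.log_exp, Real.log_pow, Real.log_exp] at h
  push_cast at h ⊢
  linarith
lemma logfac_up (n : ℕ) (hn : 1 ≤ n) :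
    Real.log (n.factorial : ℝ) ≤ 1 + Real.log n + ((n:ℝ) * Real.log n - n) := by
  have hn0 : (0:ℝ) < n := by exact_mod_cast hn
  have hf : (0:ℝ) < (n.factorial : ℝ) := by exact_mod_cast n.factorial_pos
  have h := Real.log_le_log (by positivity) (fb_up n hn)
  rw [Real.log_mul (by positivity) (by positivity), Real.log_pow, Real.log_mul (by positivity)
    (by positivity), Real.log_mul (by positivity) (by positivity), Real.log_exp,
    Real.log_pow] at h
  simp only [Real.log_exp, mul_one] at h
  linarith

lemma mono_xlogx : ∀ a b : ℝ, 1 ≤ a → a ≤ b → a * Real.log a - a ≤ b * Real.log b - b := by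
  have h : MonotoneOn (fun x : ℝ => x * Real.log x - x) (Set.Ici 1) := by
    apply monotoneOn_of_deriv_nonneg (convex_Ici 1)
    · apply ContinuousOn.sub _ continuousOn_id
      apply ContinuousOn.mul continuousOn_id
      intro x hx
      exact (Real.continuousAt_log (by simp at hx; linarith)).continuousWithinAt
    · intro x hx
      rw [interior_Ici] at hx
      have hx0 : x ≠ 0 := by simp at hx; linarith
      exact ((Real.hasDerivAt_mul_log hx0).sub (hasDerivAt_id x)).differentiableAt.differentiableWithinAt
    · intro x hx
      rw [interior_Ici] at hx
      have hx1 : (1:ℝ) < x := hx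
      have hd : deriv (fun x : ℝ => x * Real.log x - x) x = Real.log x := by
        have := ((Real.hasDerivAt_mul_log (by linarith : x ≠ 0)).sub (hasDerivAt_id x)).deriv
        simpa [Pi.sub_def] using this
      rw [hd]
      exact Real.log_nonneg hx1.le
  intro a b ha hab
  exact h (Set.mem_Ici.2 ha) (Set.mem_Ici.2 (ha.trans hab)) hab

lemma logGamma_near (t : ℝ) (ht : 2 ≤ t) :
    |Real.log (Real.Gamma t) - (t * Real.log t - t)| ≤ 2 * Real.log t + 3 := by
  have ht0 : (0:ℝ) < t := by linarith
  set n : ℕ := ⌊t⌋₊ with hn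
  have hn2 : 2 ≤ n := Nat.le_floor (by exact_mod_cast ht)
  have hnt : (n:ℝ) ≤ t := Nat.floor_le ht0.le
  have htn : t < (n:ℝ) + 1 := Nat.lt_floor_add_one t
  have hn0 : (0:ℝ) < n := by positivity
  have hn1R : (1:ℝ) ≤ n := by exact_mod_cast hn2.trans' (by norm_num)
  have hmem1 : (n:ℝ) ∈ Set.Ici (2:ℝ) := by
    simp only [Set.mem_Ici]; exact_mod_cast hn2
  have hmem2 : t ∈ Set.Ici (2:ℝ) := ht
  have hmem3 : (n:ℝ) + 1 ∈ Set.Ici (2:ℝ) := by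
    simp only [Set.mem_Ici] at hmem1 ⊢; linarith
  have M := Real.Gamma_strictMonoOn_Ici.monotoneOn
  have hG1 : Real.Gamma (n:ℝ) ≤ Real.Gamma t := M hmem1 hmem2 hnt
  have hG2 : Real.Gamma t ≤ Real.Gamma ((n:ℝ)+1) := M hmem2 hmem3 htn.le
  have hGn : Real.Gamma (n:ℝ) = ((n-1).factorial : ℝ) := by
    have : ((n-1:ℕ):ℝ) + 1 = (n:ℝ) := by
      have : 1 ≤ n := by omega
      push_cast [Nat.cast_sub this]; ring
    rw [← this, Real.Gamma_nat_eq_factorial]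
  have hGn1 : Real.Gamma ((n:ℝ)+1) = (n.factorial : ℝ) := by
    exact_mod_cast Real.Gamma_nat_eq_factorial n
  have hGpos : 0 < Real.Gamma t := Real.Gamma_pos_of_pos ht0
  have hlt : (0:ℝ) < Real.log t := Real.log_pos (by linarith)
  -- upper bound
  have hup : Real.log (Real.Gamma t) - (t * Real.log t - t) ≤ 1 + Real.log t := by
    have h1 : Real.log (Real.Gamma t) ≤ Real.log (n.factorial : ℝ) := by
      rw [← hGn1]; exact Real.log_le_log hGpos hG2
    have h2 := logfac_up n (by omega)
    have h3 : (n:ℝ) * Real.log n - n ≤ t * Real.log t - t := mono_xlogx _ _ hn1R hnt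
    have h4 : Real.log (n:ℝ) ≤ Real.log t := Real.log_le_log hn0 hnt
    linarith
  -- lower bound
  have hlow : t * Real.log t - t - Real.log (Real.Gamma t) ≤ 2 * Real.log t + 3 := by
    have h1 : Real.log ((n-1).factorial : ℝ) ≤ Real.log (Real.Gamma t) := by
      rw [← hGn]; exact Real.log_le_log (by rw [hGn]; exact_mod_cast (n-1).factorial_pos) hG1
    have h2 := logfac_low (n-1) (by omega)
    have hcast : ((n-1:ℕ):ℝ) = (n:ℝ) - 1 := by
      push_cast [Nat.cast_sub (by omega : 1 ≤ n)]; ring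
    rw [hcast] at h2
    have h3 : t * Real.log t - t ≤ ((n:ℝ)+1) * Real.log ((n:ℝ)+1) - ((n:ℝ)+1) :=
      mono_xlogx _ _ (by linarith) htn.le
    have ha1 : (1:ℝ) ≤ (n:ℝ) - 1 := by
      have : (2:ℝ) ≤ (n:ℝ) := by exact_mod_cast hn2
      linarith
    have h5 : Real.log ((n:ℝ)+1) - Real.log ((n:ℝ)-1) ≤ 2 / ((n:ℝ)-1) := by
      rw [← Real.log_div (by linarith) (by linarith)]
      have := Real.log_le_sub_one_of_pos (show (0:ℝ) < ((n:ℝ)+1)/((n:ℝ)-1) by positivity)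
      have heq : ((n:ℝ)+1)/((n:ℝ)-1) - 1 = 2/((n:ℝ)-1) := by field_simp; ring
      linarith
    have h6 : ((n:ℝ)-1) * (Real.log ((n:ℝ)+1) - Real.log ((n:ℝ)-1)) ≤ 2 := by
      calc ((n:ℝ)-1) * (Real.log ((n:ℝ)+1) - Real.log ((n:ℝ)-1)) ≤ ((n:ℝ)-1) * (2/((n:ℝ)-1)) :=
            mul_le_mul_of_nonneg_left h5 (by linarith)
      _ = 2 := by field_simp
    have h7 : Real.log ((n:ℝ)+1) ≤ 1 + Real.log t := by
      have ha : Real.log ((n:ℝ)+1) ≤ Real.log (2*t) := Real.log_le_log (by positivity) (by linarith)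
      rw [Real.log_mul two_ne_zero (by linarith)] at ha
      have : Real.log 2 ≤ 1 := by
        have := Real.log_le_sub_one_of_pos (show (0:ℝ) < 2 by norm_num)
        linarith
      linarith
    nlinarith
  rw [abs_le]
  constructor <;> linarith

lemma tendsto_logGamma_div :
    Tendsto (fun t : ℝ => (Real.log (Real.Gamma t) - (t * Real.log t - t)) / t) atTop (𝓝 0) := by
  have hg : Tendsto (fun t : ℝ => (2 * Real.log t + 3) / t) atTop (𝓝 0) := by
    have h1 : Tendsto (fun t : ℝ => Real.log t / t) atTop (𝓝 0) := by
      simpa using Real.isLittleO_log_id_atTop.tendsto_div_nhds_zero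
    have h2 : Tendsto (fun t : ℝ => t⁻¹) atTop (𝓝 0) := tendsto_inv_atTop_zero
    have := (h1.const_mul 2).add (h2.const_mul 3)
    simp only [mul_zero, add_zero] at this
    apply this.congr
    intro t
    field_simp
  apply squeeze_zero_norm' _ hg
  filter_upwards [eventually_ge_atTop (2:ℝ)] with t ht
  have ht0 : (0:ℝ) < t := by linarith
  rw [norm_div, Real.norm_eq_abs, Real.norm_eq_abs, abs_of_pos ht0]
  exact div_le_div_of_nonneg_right (logGamma_near t ht) ht0.le

lemma D_tendsto (g : ℕ → ℝ) (a : ℝ) (hg : Tendsto g atTop atTop)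
    (hga : Tendsto (fun N => g N / N) atTop (𝓝 a)) :
    Tendsto (fun N : ℕ =>
      (Real.log (Real.Gamma (g N)) - (g N * Real.log (g N) - g N)) / N) atTop (𝓝 0) := by
  have h1 : Tendsto (fun N => (Real.log (Real.Gamma (g N)) - (g N * Real.log (g N) - g N)) / g N)
      atTop (𝓝 0) := tendsto_logGamma_div.comp hg
  have h2 := h1.mul hga
  rw [zero_mul] at h2
  apply h2.congr'
  filter_upwards [hg.eventually_gt_atTop 0] with N hN
  have : g N ≠ 0 := ne_of_gt hN
  field_simp

lemma oneDivN : Tendsto (fun N : ℕ => 1 / (N:ℝ)) atTop (𝓝 0) :=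
  tendsto_one_div_atTop_nhds_zero_nat

lemma tendsto_e3 (p : ℝ) (hp : 1 < p) :
    Tendsto (fun N : ℕ =>
      (Real.log (Real.Gamma ((N:ℝ) / p)) + Real.log (Real.Gamma ((N:ℝ) + 1 - (N:ℝ) / p))
        - Real.log (Real.Gamma (N:ℝ))) / N) atTop
      (𝓝 ((1 - 1/p) * Real.log (1 - 1/p) - Real.log p / p)) := by
  have hp0 : (0:ℝ) < p := by linarith
  have hq0 : (0:ℝ) < 1 - 1/p := by
    have : 1/p < 1 := by rw [div_lt_one hp0]; exact hp
    linarith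
  have hNat : Tendsto (fun N : ℕ => (N:ℝ)) atTop atTop := tendsto_natCast_atTop_atTop
  -- the three correction terms
  have hg1 : Tendsto (fun N : ℕ => (N:ℝ) / p) atTop atTop := hNat.atTop_div_const hp0
  have hga1 : Tendsto (fun N : ℕ => ((N:ℝ)/p) / N) atTop (𝓝 (1/p)) := by
    apply tendsto_const_nhds.congr'
    filter_upwards [eventually_ge_atTop 1] with N hN
    have : (N:ℝ) ≠ 0 := by positivity
    field_simp
  have hg2 : Tendsto (fun N : ℕ => (N:ℝ) + 1 - (N:ℝ)/p) atTop atTop := by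
    have base : Tendsto (fun N : ℕ => (N:ℝ) * (1 - 1/p) + 1) atTop atTop :=
      tendsto_atTop_add_const_right atTop 1 (hNat.atTop_mul_const hq0)
    exact tendsto_atTop_mono (fun N => le_of_eq (by ring)) base
  have hga2 : Tendsto (fun N : ℕ => ((N:ℝ) + 1 - (N:ℝ)/p) / N) atTop (𝓝 (1 - 1/p)) := by
    have := ((tendsto_const_nhds : Tendsto (fun _ : ℕ => (1 - 1/p : ℝ)) atTop _).add oneDivN)
    rw [add_zero] at this
    apply this.congr'
    filter_upwards [eventually_ge_atTop 1] with N hN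
    have : (N:ℝ) ≠ 0 := by
      have : (1:ℝ) ≤ (N:ℝ) := by exact_mod_cast hN
      positivity
    field_simp
    ring
  have hga3 : Tendsto (fun N : ℕ => (N:ℝ) / N) atTop (𝓝 1) := by
    apply tendsto_const_nhds.congr'
    filter_upwards [eventually_ge_atTop 1] with N hN
    have : (N:ℝ) ≠ 0 := by positivity
    simp [this]
  have hD1 := D_tendsto _ _ hg1 hga1
  have hD2 := D_tendsto _ _ hg2 hga2
  have hD3 := D_tendsto _ _ hNat hga3
  -- the φ part
  have hlogN : Tendsto (fun N : ℕ => Real.log (N:ℝ) / (N:ℝ)) atTop (𝓝 0) := by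
    have h1 : Tendsto (fun t : ℝ => Real.log t / t) atTop (𝓝 0) := by
      simpa using Real.isLittleO_log_id_atTop.tendsto_div_nhds_zero
    exact h1.comp hNat
  have hq : Tendsto (fun N : ℕ => 1 - 1/p + 1/(N:ℝ)) atTop (𝓝 (1 - 1/p)) := by
    have := (tendsto_const_nhds : Tendsto (fun _ : ℕ => (1 - 1/p : ℝ)) atTop _).add oneDivN
    rwa [add_zero] at this
  have hqlogq : Tendsto (fun N : ℕ => (1 - 1/p + 1/(N:ℝ)) * Real.log (1 - 1/p + 1/(N:ℝ)))
      atTop (𝓝 ((1 - 1/p) * Real.log (1 - 1/p))) :=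
    hq.mul (((Real.continuousAt_log (ne_of_gt hq0)).tendsto).comp hq)
  have hT : Tendsto (fun N : ℕ =>
      (((N:ℝ)/p) * Real.log ((N:ℝ)/p) - (N:ℝ)/p
        + (((N:ℝ) + 1 - (N:ℝ)/p) * Real.log ((N:ℝ) + 1 - (N:ℝ)/p) - ((N:ℝ) + 1 - (N:ℝ)/p))
        - ((N:ℝ) * Real.log (N:ℝ) - (N:ℝ))) / N) atTop
      (𝓝 ((1 - 1/p) * Real.log (1 - 1/p) - Real.log p / p)) := by
    have hcomb := (hlogN.add hqlogq).sub hq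
    have hlim := hcomb.add (tendsto_const_nhds : Tendsto (fun _ : ℕ => (1 - 1/p - Real.log p / p : ℝ)) atTop _)
    have hval : (0 + (1 - 1/p) * Real.log (1 - 1/p) - (1 - 1/p)) + (1 - 1/p - Real.log p / p)
        = (1 - 1/p) * Real.log (1 - 1/p) - Real.log p / p := by ring
    rw [hval] at hlim
    apply hlim.congr'
    filter_upwards [eventually_ge_atTop 1] with N hN
    have hN0 : (0:ℝ) < N := by exact_mod_cast hN
    have hNne : (N:ℝ) ≠ 0 := ne_of_gt hN0
    set u := (N:ℝ)
    have hq0' : (0:ℝ) < 1 - 1/p + 1/u := by positivity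
    have hlog1 : Real.log (u/p) = Real.log u - Real.log p := Real.log_div hNne (ne_of_gt hp0)
    have hu2 : u + 1 - u/p = u * (1 - 1/p + 1/u) := by field_simp; ring
    have hlog2 : Real.log (u + 1 - u/p) = Real.log u + Real.log (1 - 1/p + 1/u) := by
      rw [hu2, Real.log_mul hNne (ne_of_gt hq0')]
    show Real.log u / u + (1 - 1/p + 1/u) * Real.log (1 - 1/p + 1/u) - (1 - 1/p + 1/u)
        + (1 - 1/p - Real.log p / p) = _
    rw [hlog1, hlog2, hu2]
    field_simp
    ring
  -- combine
  have hsum := ((hD1.add hD2).sub hD3).add hT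
  rw [add_zero, sub_zero, zero_add] at hsum
  apply hsum.congr
  intro N
  ring

lemma tendsto_e4 (p : ℝ) (hp : 0 < p) :
    Tendsto (fun N : ℕ => Real.log ((N:ℝ) - p) - Real.log N) atTop (𝓝 0) := by
  have h : Tendsto (fun N : ℕ => 1 - p * (1/(N:ℝ))) atTop (𝓝 1) := by
    have := (tendsto_const_nhds : Tendsto (fun _ : ℕ => (1:ℝ)) atTop _).sub (oneDivN.const_mul p)
    simpa using this
  have hl := ((Real.continuousAt_log one_ne_zero).tendsto).comp h
  rw [Real.log_one] at hl
  apply hl.congr'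
  filter_upwards [tendsto_natCast_atTop_atTop.eventually_gt_atTop p] with N hN
  have hN0 : (0:ℝ) < N := lt_trans hp hN
  show Real.log (1 - p * (1/(N:ℝ))) = _
  have heq : 1 - p * (1/(N:ℝ)) = ((N:ℝ) - p) / N := by field_simp
  rw [heq, Real.log_div (by linarith : (N:ℝ) - p ≠ 0) (ne_of_gt hN0)]

theorem sobolev_to_hardy_constant_limit (m : ℕ) (p : ℝ) (hp : 1 < p) (hpm : p < m) :
    Tendsto
      (fun N : ℕ =>
        (π ^ (p / 2) * N * (((N : ℝ) - p) / (p - 1)) ^ (p - 1) *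
            ((Real.Gamma ((N : ℝ) / p) * Real.Gamma ((N : ℝ) + 1 - (N : ℝ) / p)) /
                (Real.Gamma (N : ℝ) * Real.Gamma (1 + (N : ℝ) / 2))) ^ (p / (N : ℝ))) *
          ((((m : ℝ) * π ^ ((m : ℝ) / 2) / Real.Gamma (1 + (m : ℝ) / 2)) /
              ((N : ℝ) * π ^ ((N : ℝ) / 2) / Real.Gamma (1 + (N : ℝ) / 2))) ^ (p / (N : ℝ))) *
          (((m : ℝ) - p) / ((N : ℝ) - p)) ^ (p - p / (N : ℝ)))
      atTop (nhds ((((m : ℝ) - p) / p) ^ p)) := by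
  have hp0 : (0:ℝ) < p := by linarith
  have hp1 : (0:ℝ) < p - 1 := by linarith
  have hmp : (0:ℝ) < (m:ℝ) - p := by linarith
  have hm0 : (0:ℝ) < (m:ℝ) := by linarith
  have hπ : (0:ℝ) < π := Real.pi_pos
  have hgm : (0:ℝ) < Real.Gamma (1 + (m:ℝ)/2) := Real.Gamma_pos_of_pos (by positivity)
  set K : ℝ := Real.log m + Real.log π * ((m:ℝ)/2) - Real.log (Real.Gamma (1 + (m:ℝ)/2))
      - Real.log ((m:ℝ) - p) with hK
  set Cst : ℝ := p * Real.log ((m:ℝ) - p) - (p - 1) * Real.log (p - 1) with hCst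
  set c : ℝ := (1 - 1/p) * Real.log (1 - 1/p) - Real.log p / p with hc
  -- limit of the log expression
  have he3 := tendsto_e3 p hp
  have he4 := tendsto_e4 p hp0
  have hS : Tendsto (fun N : ℕ =>
      p * ((Real.log (Real.Gamma ((N:ℝ) / p)) + Real.log (Real.Gamma ((N:ℝ) + 1 - (N:ℝ) / p))
        - Real.log (Real.Gamma (N:ℝ))) / N)
      - (Real.log ((N:ℝ) - p) - Real.log N)
      + p * (1/(N:ℝ)) * (Real.log ((N:ℝ) - p) - Real.log N)
      + p * (1/(N:ℝ)) * K + Cst) atTop (𝓝 (p * c + Cst)) := by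
    have t1 := he3.const_mul p
    have t2 := (oneDivN.const_mul p).mul he4
    have t3 := (oneDivN.const_mul p).mul_const K
    have hraw := (((t1.sub he4).add t2).add t3).add_const Cst
    have hval : (p * c - 0 + p * 0 * 0 + p * 0 * K) + Cst = p * c + Cst := by ring
    rw [hval] at hraw
    exact hraw
  have hexp := (Real.continuous_exp.tendsto _).comp hS
  have hval2 : Real.exp (p * c + Cst) = (((m:ℝ) - p) / p) ^ p := by
    have h1 : 1 - 1/p = (p - 1) / p := by field_simp
    have h2 : p * c + Cst = Real.log (((m:ℝ) - p) / p) * p := by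
      rw [hc, hCst, h1, Real.log_div (ne_of_gt hp1) (ne_of_gt hp0),
        Real.log_div (ne_of_gt hmp) (ne_of_gt hp0)]
      field_simp
      ring
    rw [h2, ← Real.rpow_def_of_pos (by positivity)]
  rw [hval2] at hexp
  apply hexp.congr'
  filter_upwards [tendsto_natCast_atTop_atTop.eventually_gt_atTop p] with N hN
  have hN0 : (0:ℝ) < N := lt_trans hp0 hN
  have hNp : (0:ℝ) < (N:ℝ) - p := by linarith
  have hNdp : (0:ℝ) < (N:ℝ)/p := by positivity
  have hN2 : (0:ℝ) < (N:ℝ) + 1 - (N:ℝ)/p := by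
    have : (N:ℝ)/p < (N:ℝ) := by
      rw [div_lt_iff₀ hp0]; nlinarith
    linarith
  have hg1 : (0:ℝ) < Real.Gamma ((N:ℝ)/p) := Real.Gamma_pos_of_pos hNdp
  have hg2 : (0:ℝ) < Real.Gamma ((N:ℝ) + 1 - (N:ℝ)/p) := Real.Gamma_pos_of_pos hN2
  have hg3 : (0:ℝ) < Real.Gamma (N:ℝ) := Real.Gamma_pos_of_pos hN0
  have hg4 : (0:ℝ) < Real.Gamma (1 + (N:ℝ)/2) := Real.Gamma_pos_of_pos (by positivity)
  show Real.exp _ = _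
  -- rewrite each factor as an exponential
  have h1 : π ^ (p/2) = Real.exp (Real.log π * (p/2)) := Real.rpow_def_of_pos hπ _
  have h3 : (((N:ℝ) - p) / (p - 1)) ^ (p - 1)
      = Real.exp ((Real.log ((N:ℝ) - p) - Real.log (p - 1)) * (p - 1)) := by
    rw [Real.rpow_def_of_pos (by positivity), Real.log_div (ne_of_gt hNp) (ne_of_gt hp1)]
  have h4 : ((Real.Gamma ((N:ℝ)/p) * Real.Gamma ((N:ℝ) + 1 - (N:ℝ)/p)) /
        (Real.Gamma (N:ℝ) * Real.Gamma (1 + (N:ℝ)/2))) ^ (p / (N:ℝ))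
      = Real.exp ((Real.log (Real.Gamma ((N:ℝ)/p)) + Real.log (Real.Gamma ((N:ℝ) + 1 - (N:ℝ)/p))
          - (Real.log (Real.Gamma (N:ℝ)) + Real.log (Real.Gamma (1 + (N:ℝ)/2)))) * (p / (N:ℝ))) := by
    rw [Real.rpow_def_of_pos (by positivity),
      Real.log_div (by positivity) (by positivity),
      Real.log_mul (ne_of_gt hg1) (ne_of_gt hg2), Real.log_mul (ne_of_gt hg3) (ne_of_gt hg4)]
  have h5 : (((m:ℝ) * π ^ ((m:ℝ)/2) / Real.Gamma (1 + (m:ℝ)/2)) /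
        ((N:ℝ) * π ^ ((N:ℝ)/2) / Real.Gamma (1 + (N:ℝ)/2))) ^ (p / (N:ℝ))
      = Real.exp (((Real.log m + Real.log π * ((m:ℝ)/2) - Real.log (Real.Gamma (1 + (m:ℝ)/2)))
          - (Real.log (N:ℝ) + Real.log π * ((N:ℝ)/2) - Real.log (Real.Gamma (1 + (N:ℝ)/2))))
          * (p / (N:ℝ))) := by
    rw [Real.rpow_def_of_pos (by positivity),
      Real.log_div (by positivity) (by positivity),
      Real.log_div (by positivity) (ne_of_gt hgm),
      Real.log_div (by positivity) (ne_of_gt hg4),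
      Real.log_mul (ne_of_gt hm0) (by positivity),
      Real.log_mul (ne_of_gt hN0) (by positivity),
      Real.log_rpow hπ, Real.log_rpow hπ]
    ring_nf
  have h6 : (((m:ℝ) - p) / ((N:ℝ) - p)) ^ (p - p / (N:ℝ))
      = Real.exp ((Real.log ((m:ℝ) - p) - Real.log ((N:ℝ) - p)) * (p - p / (N:ℝ))) := by
    rw [Real.rpow_def_of_pos (by positivity), Real.log_div (ne_of_gt hmp) (ne_of_gt hNp)]
  have hN' : Real.exp (Real.log π * (p/2)) * (N:ℝ)
      = Real.exp (Real.log π * (p/2) + Real.log (N:ℝ)) := by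
    rw [Real.exp_add, Real.exp_log hN0]
  rw [h1, h3, h4, h5, h6, hN', ← Real.exp_add, ← Real.exp_add, ← Real.exp_add, ← Real.exp_add]
  congr 1
  have hNne : (N:ℝ) ≠ 0 := ne_of_gt hN0
  rw [hK, hCst]
  field_simp
  ring
end
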